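/- arXiv:0801.2078 — 5 statements merged into one kernel-verified Lean document; each statement's English description precedes it below -/
import Mathlib

section
/- For every nonnegative integer n and every real z, J_n(z) = (1/π) ∫_0^π cos(nα − z·sin α) dα, i.e., the power-series Bessel function agrees with Bessel's integral representation. -/
noncomputable def besselJ (n : ℕ) (z : ℝ) : ℝ :=
  ∑' m : ℕ, (-1 : ℝ) ^ m / (m.factorial * (m + n).factorial) * (z / 2) ^ (2 * m + n)

open Complex intervalIntegral Finset

namespace BesselAux

variable (n : ℕ) (z : ℝ)

/-- complex integrand term -/
noncomputable def G (k : ℕ) (α : ℝ) : ℂ :=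
  ((-Complex.I * z) ^ k / k.factorial) * ((Real.sin α : ℂ)) ^ k
    * Complex.exp (Complex.I * n * α)

noncomputable def r (k j : ℕ) : ℝ :=
  (-1 : ℝ) ^ (j + k) * (-z / 2) ^ k / k.factorial * (k.choose j)

def d (k j : ℕ) : ℤ := (n : ℤ) + 2 * j - k

lemma Ere0 {c : ℤ} (hc : c ≠ 0) :
    (∫ α : ℝ in (0:ℝ)..Real.pi, Complex.exp (Complex.I * c * α)).re = 0 := by
  have hc' : (Complex.I * (c:ℂ)) ≠ 0 := by
    simp [Complex.I_ne_zero, hc]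
  have h0 : (∫ α : ℝ in (0:ℝ)..Real.pi, Complex.exp (Complex.I * c * α))
      = (Complex.exp (Complex.I * c * Real.pi) - Complex.exp (Complex.I * c * 0))
        / (Complex.I * c) := by
    simpa [mul_assoc] using integral_exp_mul_complex (a := 0) (b := Real.pi) hc'
  rw [h0]
  have h1 : Complex.exp (Complex.I * c * Real.pi) = ((-1 : ℝ) ^ c : ℝ) := by
    rw [show (Complex.I * c * Real.pi : ℂ) = c * (Real.pi * Complex.I) by ring]
    rw [Complex.exp_int_mul, Complex.exp_pi_mul_I]
    have : ((-1:ℂ) ^ c) = (((-1:ℝ) ^ c : ℝ) : ℂ) := by push_cast; ring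
    rw [this]
  rw [h1]
  simp [Complex.div_re, Complex.normSq]
  left
  have : ((-1:ℂ) ^ c) = (((-1:ℝ) ^ c : ℝ) : ℂ) := by push_cast; ring
  rw [this, Complex.ofReal_im]

lemma Epi : (∫ α : ℝ in (0:ℝ)..Real.pi, Complex.exp (Complex.I * ((0:ℤ):ℂ) * α)) = Real.pi := by
  simp

/-- binomial expansion of the integrand -/
lemma expand (k : ℕ) (α : ℝ) :
    G n z k α = ∑ j ∈ Finset.range (k + 1),
      ((r z k j : ℝ) : ℂ) * Complex.exp (Complex.I * ((d n k j : ℤ) : ℂ) * α) := by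
  have hsin : ((Real.sin α : ℂ)) =
      (Complex.exp (Complex.I * α) - Complex.exp (-(Complex.I * α))) / (2 * Complex.I) := by
    rw [Complex.ofReal_sin, Complex.sin]
    field_simp
    ring_nf
    rw [Complex.I_sq]
    ring
  rw [G, hsin, div_pow, sub_pow]
  rw [Finset.sum_div, Finset.mul_sum, Finset.sum_mul]
  refine Finset.sum_congr rfl fun j hj => ?_
  have hj' : j ≤ k := by simpa [Nat.lt_succ_iff] using hj
  rw [r, d]
  rw [← Complex.exp_nat_mul, ← Complex.exp_nat_mul]
  have hI : (2 * Complex.I) ^ k ≠ 0 := by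
    simp [Complex.I_ne_zero]
  have hfac : ((k.factorial : ℂ)) ≠ 0 := by
    exact_mod_cast Nat.cast_ne_zero.mpr (Nat.factorial_ne_zero k)
  have hexp : Complex.exp (↑j * (Complex.I * ↑α)) * Complex.exp (↑(k - j) * -(Complex.I * ↑α))
      * Complex.exp (Complex.I * ↑n * ↑α)
      = Complex.exp (Complex.I * ((n : ℂ) + 2 * j - k) * α) := by
    rw [← Complex.exp_add, ← Complex.exp_add]
    congr 1
    have : ((k - j : ℕ) : ℂ) = (k : ℂ) - (j : ℂ) := by
      push_cast [Nat.cast_sub hj']; ring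
    rw [this]; ring
  -- now it's algebra in ℂ
  push_cast
  rw [← hexp]
  have hkj : ((k - j : ℕ) : ℂ) = (k : ℂ) - j := by push_cast [Nat.cast_sub hj']; ring
  rw [hkj]
  field_simp
  ring_nf
  rw [mul_assoc _ ((-1 / 2 : ℂ) ^ k), ← mul_pow]
  norm_num
  left
  rw [← mul_pow]
  norm_num

lemma contG (k : ℕ) : Continuous (G n z k) := by
  unfold G
  fun_prop

lemma contE (c : ℤ) : Continuous fun α : ℝ => Complex.exp (Complex.I * (c : ℂ) * α) := by
  fun_prop

lemma intG (k : ℕ) : (∫ α in (0:ℝ)..Real.pi, G n z k α)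
    = ∑ j ∈ Finset.range (k + 1),
        ((r z k j : ℝ) : ℂ) * ∫ α in (0:ℝ)..Real.pi, Complex.exp (Complex.I * ((d n k j : ℤ) : ℂ) * α) := by
  rw [intervalIntegral.integral_congr (fun α _ => expand n z k α)]
  rw [intervalIntegral.integral_finset_sum]
  · exact Finset.sum_congr rfl fun j _ => intervalIntegral.integral_const_mul _ _
  · intro j _
    exact ((continuous_const.mul (contE (d n k j))).intervalIntegrable _ _)

lemma intGre (k : ℕ) : (∫ α in (0:ℝ)..Real.pi, (G n z k α).re)
    = ∑ j ∈ Finset.range (k + 1),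
        r z k j * (∫ α in (0:ℝ)..Real.pi, Complex.exp (Complex.I * ((d n k j : ℤ) : ℂ) * α)).re := by
  have h1 : (∫ α in (0:ℝ)..Real.pi, (G n z k α).re)
      = (∫ α in (0:ℝ)..Real.pi, G n z k α).re := by
    have := Complex.reCLM.intervalIntegral_comp_comm
      ((contG n z k).intervalIntegrable (0:ℝ) Real.pi (μ := MeasureTheory.volume))
    simpa using this
  rw [h1, intG, Complex.re_sum]
  exact Finset.sum_congr rfl fun j _ => by simp [Complex.re_ofReal_mul]

lemma int_zero (k : ℕ) (hk : ∀ m, k ≠ n + 2 * m) :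
    (∫ α in (0:ℝ)..Real.pi, (G n z k α).re) = 0 := by
  rw [intGre]
  refine Finset.sum_eq_zero fun j hj => ?_
  have hd : d n k j ≠ 0 := by
    intro h
    rw [d] at h
    exact hk j (by omega)
  rw [Ere0 hd, mul_zero]

lemma int_val (m : ℕ) :
    (∫ α in (0:ℝ)..Real.pi, (G n z (n + 2 * m) α).re)
      = Real.pi * ((-1:ℝ) ^ m / (m.factorial * (m + n).factorial) * (z / 2) ^ (2 * m + n)) := by
  rw [intGre, Finset.sum_eq_single m]
  · have hd : d n (n + 2 * m) m = 0 := by rw [d]; omega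
    rw [hd, Epi, Complex.ofReal_re]
    -- now pure algebra
    have hs : (-1:ℝ) ^ (m + (n + 2 * m)) * (-1) ^ (n + 2 * m) = (-1) ^ m := by
      rw [← pow_add, show m + (n + 2 * m) + (n + 2 * m) = m + 2 * (n + 2 * m) by ring,
        pow_add, pow_mul]
      norm_num
    have hr : r z (n + 2 * m) m
        = (-1:ℝ) ^ m * ((z / 2) ^ (n + 2 * m)
            * (((n + 2 * m).choose m : ℝ) / (n + 2 * m).factorial)) := by
      rw [r, show (-z / 2 : ℝ) = (-1) * (z / 2) by ring, mul_pow, ← hs]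
      ring
    have hc : (((n + 2 * m).choose m : ℝ)) * m.factorial * (n + m).factorial
        = (n + 2 * m).factorial := by
      exact_mod_cast congrArg (Nat.cast (R := ℝ))
        (by simpa [show n + 2 * m - m = n + m by omega] using
          Nat.choose_mul_factorial_mul_factorial (show m ≤ n + 2 * m by omega))
    have h1 : ((n + 2 * m).factorial : ℝ) ≠ 0 := by
      exact_mod_cast Nat.factorial_ne_zero _
    have h2 : ((m).factorial : ℝ) ≠ 0 := by exact_mod_cast Nat.factorial_ne_zero _
    have h3 : ((n + m).factorial : ℝ) ≠ 0 := by exact_mod_cast Nat.factorial_ne_zero _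
    have key : (((n + 2 * m).choose m : ℝ)) / (n + 2 * m).factorial
        = 1 / (m.factorial * ((n + m).factorial)) := by
      rw [div_eq_div_iff h1 (by positivity)]
      linear_combination hc
    rw [hr, key, show 2 * m + n = n + 2 * m by ring, show m + n = n + m by ring]
    ring
  · intro j hj hne
    have hd : d n (n + 2 * m) j ≠ 0 := by
      rw [d]; omega
    rw [Ere0 hd, mul_zero]
  · intro h
    exact absurd (Finset.mem_range.mpr (by omega)) h

lemma ptsum (α : ℝ) :
    HasSum (fun k => (G n z k α).re) (Real.cos (n * α - z * Real.sin α)) := by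
  have h := NormedSpace.expSeries_div_hasSum_exp (𝔸 := ℂ) (-Complex.I * z * Real.sin α)
  rw [← Complex.exp_eq_exp_ℂ] at h
  have h2 := h.mul_right (Complex.exp (Complex.I * n * α))
  have h3 := Complex.reCLM.hasSum h2
  simp only [Complex.reCLM_apply] at h3
  convert h3 using 2 with k
  · rw [G]
    congr 1
    rw [mul_pow]
    ring
  · rw [← Complex.exp_add,
      show (-Complex.I * z * Real.sin α + Complex.I * n * α)
        = ((n * α - z * Real.sin α : ℝ) : ℂ) * Complex.I by push_cast; ring,
      Complex.exp_ofReal_mul_I_re]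

lemma normG_le (k : ℕ) (α : ℝ) : ‖(G n z k α).re‖ ≤ |z| ^ k / k.factorial := by
  have h1 : ‖(G n z k α).re‖ ≤ ‖G n z k α‖ := Complex.abs_re_le_norm _
  refine h1.trans ?_
  rw [G]
  rw [norm_mul, norm_mul, norm_div, norm_pow, norm_pow]
  have e1 : ‖(-Complex.I * z)‖ = |z| := by
    simp
  have e2 : ‖((Real.sin α : ℂ))‖ = |Real.sin α| := by rw [Complex.norm_real, Real.norm_eq_abs]
  have e3 : ‖(Complex.exp (Complex.I * n * α))‖ = 1 := by
    rw [show (Complex.I * n * α : ℂ) = ((n * α : ℝ) : ℂ) * Complex.I by push_cast; ring]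
    exact Complex.norm_exp_ofReal_mul_I _
  rw [e1, e2, e3, mul_one]
  have e4 : ‖((k.factorial : ℂ))‖ = (k.factorial : ℝ) := by
    simp
  rw [e4]
  have h5 : |Real.sin α| ^ k ≤ 1 :=
    pow_le_one₀ (abs_nonneg _) (Real.abs_sin_le_one α)
  have h6 : 0 ≤ |z| ^ k / (k.factorial : ℝ) := by positivity
  calc |z| ^ k / (k.factorial : ℝ) * |Real.sin α| ^ k
      ≤ |z| ^ k / (k.factorial : ℝ) * 1 := by
        exact mul_le_mul_of_nonneg_left h5 h6
    _ = |z| ^ k / (k.factorial : ℝ) := mul_one _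

lemma hasSum_int :
    HasSum (fun k => ∫ α in (0:ℝ)..Real.pi, (G n z k α).re)
      (∫ α in (0:ℝ)..Real.pi, Real.cos (n * α - z * Real.sin α)) := by
  apply intervalIntegral.hasSum_integral_of_dominated_convergence
    (bound := fun k _ => |z| ^ k / k.factorial)
  · intro k
    exact (Complex.continuous_re.comp (contG n z k)).aestronglyMeasurable
  · intro k
    filter_upwards with α _
    exact normG_le n z k α
  · filter_upwards with α _
    exact Real.summable_pow_div_factorial |z|
  · exact intervalIntegrable_const
  · filter_upwards with α _
    exact ptsum n z α

end BesselAux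

theorem besselJ_integral_rep (n : ℕ) (z : ℝ) :
    besselJ n z = (1 / Real.pi) * ∫ α in (0 : ℝ)..Real.pi, Real.cos (n * α - z * Real.sin α) := by
  classical
  set S := ∫ α in (0 : ℝ)..Real.pi, Real.cos (n * α - z * Real.sin α) with hS
  have H := BesselAux.hasSum_int n z
  have hg : Function.Injective (fun m : ℕ => n + 2 * m) := by
    intro a b hab
    dsimp at hab
    omega
  have hzero : ∀ k ∉ Set.range (fun m : ℕ => n + 2 * m),
      (∫ α in (0:ℝ)..Real.pi, (BesselAux.G n z k α).re) = 0 := by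
    intro k hk
    refine BesselAux.int_zero n z k fun m hm => hk ⟨m, hm.symm⟩
  have H2 := (hg.hasSum_iff hzero).mpr H
  rw [Function.comp_def] at H2
  have heq : (fun m : ℕ => ∫ α in (0:ℝ)..Real.pi, (BesselAux.G n z (n + 2 * m) α).re)
      = fun m : ℕ => Real.pi *
        ((-1:ℝ) ^ m / (m.factorial * (m + n).factorial) * (z / 2) ^ (2 * m + n)) :=
    funext fun m => BesselAux.int_val n z m
  rw [heq] at H2
  have hπ : (Real.pi : ℝ) ≠ 0 := Real.pi_ne_zero
  have H4 : HasSum (fun m : ℕ =>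
      (-1:ℝ) ^ m / (m.factorial * (m + n).factorial) * (z / 2) ^ (2 * m + n))
      (Real.pi⁻¹ * S) := by
    have := H2.mul_left (Real.pi)⁻¹
    simpa [inv_mul_cancel_left₀ hπ] using this
  rw [besselJ, H4.tsum_eq, one_div, hS]
end

section
/- Define f(z) = Σ_{n=1}^∞ 4n·J_n(z)². Then f is differentiable on (0,∞) and f'(z) = 2z·(J_0(z)² + J_1(z)²) for all z > 0. -/
/-- single term of the Bessel series -/
noncomputable def bj (n m : ℕ) (z : ℝ) : ℝ :=
  (-1 : ℝ) ^ m / (m.factorial * (m + n).factorial) * (z / 2) ^ (2 * m + n)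

lemma besselJ_eq (n : ℕ) (z : ℝ) : besselJ n z = ∑' m, bj n m z := rfl

lemma master (q : ℝ) : Summable (fun m : ℕ => ((m : ℝ) + 1) * q ^ m / m.factorial) := by
  have h1 : Summable (fun m : ℕ => q ^ m / m.factorial) := Real.summable_pow_div_factorial q
  have h2 : Summable (fun m : ℕ => (m : ℝ) * q ^ m / m.factorial) := by
    apply (summable_nat_add_iff 1).mp
    have : (fun m : ℕ => ((m : ℕ) + 1 : ℝ) * q ^ (m + 1) / (m + 1).factorial)
        = fun m : ℕ => q * (q ^ m / m.factorial) := by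
      funext m
      have hm : ((m + 1).factorial : ℝ) = (m + 1) * m.factorial := by
        push_cast [Nat.factorial_succ]; ring
      rw [hm]
      have h0 : ((m : ℝ) + 1) ≠ 0 := by positivity
      have h0' : (m.factorial : ℝ) ≠ 0 := by positivity
      field_simp
      ring
    simpa [this] using (h1.mul_left q)
  have := h2.add h1
  apply this.congr
  intro m
  ring

lemma bj_abs_le (n m : ℕ) {z R : ℝ} (hz : |z| ≤ R) :
    |bj n m z| ≤ (R / 2) ^ n / n.factorial * (((R / 2) ^ 2) ^ m / m.factorial) := by
  have hR : 0 ≤ R := le_trans (abs_nonneg z) hz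
  have hfac : (m.factorial * n.factorial : ℝ) ≤ (m.factorial * (m + n).factorial : ℝ) := by
    have : m.factorial * n.factorial ∣ (m + n).factorial :=
      Nat.factorial_mul_factorial_dvd_factorial_add m n
    have h1 : m.factorial * n.factorial ≤ (m + n).factorial :=
      Nat.le_of_dvd (m + n).factorial_pos this
    calc (m.factorial * n.factorial : ℝ) ≤ ((m+n).factorial : ℝ) := by exact_mod_cast h1
      _ ≤ (m.factorial * (m+n).factorial : ℝ) := by
          have : (1 : ℝ) ≤ m.factorial := by exact_mod_cast m.factorial_pos
          nlinarith [ (Nat.cast_pos.mpr (m+n).factorial_pos : (0:ℝ) < (m+n).factorial) ]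
  have habs : |bj n m z| = (|z| / 2) ^ (2 * m + n) / (m.factorial * (m + n).factorial) := by
    unfold bj
    rw [abs_mul, abs_div, abs_pow, abs_pow, abs_neg, abs_one, one_pow, abs_div]
    simp only [abs_of_nonneg, Nat.cast_nonneg, abs_mul, Nat.abs_cast, abs_two]
    ring
  rw [habs]
  have hpow : (|z| / 2) ^ (2 * m + n) ≤ (R / 2) ^ (2 * m + n) := by
    gcongr
  have hrhs : (R / 2) ^ n / n.factorial * (((R / 2) ^ 2) ^ m / m.factorial)
      = (R / 2) ^ (2 * m + n) / (m.factorial * n.factorial) := by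
    rw [← pow_mul]
    rw [div_mul_div_comm, ← pow_add]
    ring_nf
  rw [hrhs]
  have h1 : (0:ℝ) < m.factorial * n.factorial := by positivity
  apply div_le_div₀ (by positivity) hpow h1 hfac

/-- exponential-type constant -/
noncomputable def KK (R : ℝ) : ℝ := ∑' m : ℕ, ((R / 2) ^ 2) ^ m / m.factorial

lemma KK_nonneg (R : ℝ) : 0 ≤ KK R := by
  apply tsum_nonneg
  intro m
  positivity

lemma summable_expser (R : ℝ) : Summable (fun m : ℕ => ((R / 2) ^ 2) ^ m / m.factorial) :=
  Real.summable_pow_div_factorial _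

lemma summable_bj_abs (n : ℕ) (z : ℝ) : Summable (fun m => |bj n m z|) := by
  apply Summable.of_nonneg_of_le (fun m => abs_nonneg _)
    (fun m => bj_abs_le n m (le_refl |z|))
  exact (summable_expser |z|).mul_left _

lemma summable_bj (n : ℕ) (z : ℝ) : Summable (fun m => bj n m z) :=
  (summable_bj_abs n z).of_abs

lemma besselJ_abs_le (n : ℕ) {z R : ℝ} (hz : |z| ≤ R) :
    |besselJ n z| ≤ (R / 2) ^ n / n.factorial * KK R := by
  rw [besselJ_eq]
  have hnorm : |∑' m, bj n m z| ≤ ∑' m, |bj n m z| := by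
    have h := norm_tsum_le_tsum_norm (f := fun m => bj n m z)
      (by simp only [Real.norm_eq_abs]; exact summable_bj_abs n z)
    simpa only [Real.norm_eq_abs] using h
  calc |∑' m, bj n m z| ≤ ∑' m, |bj n m z| := hnorm
    _ ≤ ∑' m : ℕ, (R / 2) ^ n / n.factorial * (((R / 2) ^ 2) ^ m / m.factorial) := by
        apply Summable.tsum_le_tsum (fun m => bj_abs_le n m hz) (summable_bj_abs n z)
        exact (summable_expser R).mul_left _
    _ = (R / 2) ^ n / n.factorial * KK R := tsum_mul_left

/-- derivative term of the Bessel series -/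
noncomputable def bj' (n m : ℕ) (z : ℝ) : ℝ :=
  (-1 : ℝ) ^ m / (m.factorial * (m + n).factorial) *
    (((2 * m + n : ℕ) : ℝ) * (z / 2) ^ (2 * m + n - 1) * (1 / 2))

lemma hasDerivAt_bj (n m : ℕ) (z : ℝ) : HasDerivAt (fun w => bj n m w) (bj' n m z) z := by
  have h : HasDerivAt (fun w : ℝ => (w / 2) ^ (2 * m + n))
      (((2 * m + n : ℕ) : ℝ) * (z / 2) ^ (2 * m + n - 1) * (1 / 2)) z := by
    have h0 : HasDerivAt (fun w : ℝ => w / 2) (1 / 2) z := by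
      simpa using (hasDerivAt_id z).div_const 2
    exact h0.pow _
  simpa [bj, bj', mul_comm] using h.const_mul ((-1 : ℝ) ^ m / (m.factorial * (m + n).factorial))

lemma bj'_abs_le (n m : ℕ) {w R : ℝ} (hw : |w| ≤ R) (hR : 2 ≤ R) :
    |bj' n m w| ≤ ((n : ℝ) + 2) * ((R / 2) ^ n) * (((m : ℝ) + 1) * ((R / 2) ^ 2) ^ m / m.factorial) := by
  have hR0 : (0:ℝ) < R := by linarith
  have hR1 : (1:ℝ) ≤ R / 2 := by linarith
  have habs : |bj' n m w| = ((2 * m + n : ℕ) : ℝ) * (|w| / 2) ^ (2 * m + n - 1) * (1 / 2)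
      / (m.factorial * (m + n).factorial) := by
    unfold bj'
    simp only [abs_mul, abs_div, abs_pow, abs_neg, abs_one, one_pow, Nat.abs_cast, abs_two]
    ring
  rw [habs]
  have h1 : ((2 * m + n : ℕ) : ℝ) ≤ ((n : ℝ) + 2) * ((m : ℝ) + 1) := by
    push_cast
    nlinarith [Nat.cast_nonneg (α := ℝ) m, Nat.cast_nonneg (α := ℝ) n]
  have h2 : (|w| / 2) ^ (2 * m + n - 1) ≤ (R / 2) ^ n * ((R / 2) ^ 2) ^ m := by
    calc (|w| / 2) ^ (2 * m + n - 1) ≤ (R / 2) ^ (2 * m + n - 1) := by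
          gcongr
      _ ≤ (R / 2) ^ (2 * m + n) := pow_le_pow_right₀ hR1 (Nat.sub_le _ _)
      _ = (R / 2) ^ n * ((R / 2) ^ 2) ^ m := by
          rw [← pow_mul, ← pow_add]; ring_nf
  have hnum : ((2 * m + n : ℕ) : ℝ) * (|w| / 2) ^ (2 * m + n - 1) * (1 / 2)
      ≤ ((n : ℝ) + 2) * ((m : ℝ) + 1) * ((R / 2) ^ n * ((R / 2) ^ 2) ^ m) := by
    have hA : (0:ℝ) ≤ ((2 * m + n : ℕ) : ℝ) := Nat.cast_nonneg _
    have hB : (0:ℝ) ≤ (|w| / 2) ^ (2 * m + n - 1) := by positivity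
    nlinarith [pow_nonneg (by positivity : (0:ℝ) ≤ R/2) n,
      pow_nonneg (by positivity : (0:ℝ) ≤ (R/2)^2) m]
  have hden : (1:ℝ) ≤ ((m + n).factorial : ℝ) := by exact_mod_cast (m + n).factorial_pos
  have hmf : (0:ℝ) < (m.factorial : ℝ) := by exact_mod_cast m.factorial_pos
  calc ((2 * m + n : ℕ) : ℝ) * (|w| / 2) ^ (2 * m + n - 1) * (1 / 2)
      / (m.factorial * (m + n).factorial)
      ≤ (((n : ℝ) + 2) * ((m : ℝ) + 1) * ((R / 2) ^ n * ((R / 2) ^ 2) ^ m)) / (m.factorial * 1) := by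
        apply div_le_div₀ (by positivity) hnum (by positivity)
        nlinarith
    _ = ((n : ℝ) + 2) * ((R / 2) ^ n) * (((m : ℝ) + 1) * ((R / 2) ^ 2) ^ m / m.factorial) := by
        field_simp

lemma summable_bj'_bound (n : ℕ) (R : ℝ) :
    Summable (fun m : ℕ => ((n : ℝ) + 2) * ((R / 2) ^ n) * (((m : ℝ) + 1) * ((R / 2) ^ 2) ^ m / m.factorial)) :=
  (master _).mul_left _

lemma hasDerivAt_besselJ_tsum (n : ℕ) (z : ℝ) :
    HasDerivAt (besselJ n) (∑' m, bj' n m z) z := by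
  set R : ℝ := |z| + 2 with hRdef
  have hR2 : (2:ℝ) ≤ R := by have := abs_nonneg z; rw [hRdef]; linarith
  have hzmem : z ∈ Metric.ball (0:ℝ) R := by
    simp [Metric.mem_ball, Real.dist_eq, hRdef]
  have key := hasDerivAt_tsum_of_isPreconnected (summable_bj'_bound n R)
    Metric.isOpen_ball (convex_ball (0:ℝ) R).isPreconnected
    (fun m w _ => hasDerivAt_bj n m w)
    (fun m w hwmem => by
      have hw : |w| ≤ R := by
        have := Metric.mem_ball.mp hwmem
        rw [Real.dist_eq, sub_zero] at this
        linarith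
      simpa only [Real.norm_eq_abs] using bj'_abs_le n m hw hR2)
    hzmem (summable_bj n z) hzmem
  have : besselJ n = fun w => ∑' m, bj n m w := by funext w; rfl
  rw [this]
  exact key

/-- shifted version of the series for `besselJ (n)` -/
noncomputable def sh (n : ℕ) (z : ℝ) : ℕ → ℝ := fun m => if m = 0 then 0 else bj n (m - 1) z

lemma summable_sh (n : ℕ) (z : ℝ) : Summable (sh n z) := by
  apply (summable_nat_add_iff 1).mp
  have : (fun m : ℕ => sh n z (m + 1)) = fun m => bj n m z := by
    funext m; simp [sh]
  rw [this]
  exact summable_bj n z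

lemma tsum_sh (n : ℕ) (z : ℝ) : ∑' m, sh n z m = besselJ n z := by
  rw [Summable.tsum_eq_zero_add (summable_sh n z)]
  have h1 : sh n z 0 = 0 := by simp [sh]
  have h2 : (fun b : ℕ => sh n z (b + 1)) = fun b => bj n b z := by
    funext b; simp [sh]
  rw [h1, h2, zero_add, besselJ_eq]

lemma bj'_eq_step (n m : ℕ) (z : ℝ) :
    bj' (n + 1) m z = (bj n m z - sh (n + 2) z m) / 2 := by
  match m with
  | 0 =>
    simp only [bj, bj', sh, if_pos rfl, sub_zero]
    have e1 : 2 * 0 + (n + 1) - 1 = 2 * 0 + n := by omega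
    rw [e1]
    simp only [Nat.factorial_succ, Nat.zero_add, Nat.factorial_zero]
    have h1 : ((n.factorial : ℝ)) ≠ 0 := by positivity
    have h2 : ((n : ℝ) + 1) ≠ 0 := by positivity
    push_cast
    field_simp
    ring
  | k + 1 =>
    simp only [bj, bj', sh, Nat.add_eq_zero, one_ne_zero, and_false, if_false, Nat.add_sub_cancel]
    have e1 : (k + 1) + (n + 1) = (k + n + 1) + 1 := by omega
    have e2 : 2 * (k + 1) + (n + 1) - 1 = 2 * k + n + 2 := by omega
    have e3 : (k + 1) + n = (k + n) + 1 := by omega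
    have e4 : k + (n + 2) = (k + n + 1) + 1 := by omega
    have e5 : 2 * (k + 1) + n = (2 * k + n + 2) := by omega
    have e6 : 2 * k + (n + 2) = 2 * k + n + 2 := by omega
    have e7 : k + n + 1 = (k + n) + 1 := rfl
    rw [e1, e2, e3, e4, e5, e6]
    simp only [Nat.factorial_succ, e7]
    have h1 : ((k.factorial : ℝ)) ≠ 0 := by positivity
    have h2 : (((k + n).factorial : ℝ)) ≠ 0 := by positivity
    have h3 : ((k : ℝ) + 1) ≠ 0 := by positivity
    have h4 : ((k : ℝ) + (n : ℝ) + 1) ≠ 0 := by positivity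
    have h5 : ((k : ℝ) + (n : ℝ) + 2) ≠ 0 := by positivity
    push_cast
    field_simp
    ring

lemma besselJ_deriv (n : ℕ) (z : ℝ) :
    HasDerivAt (besselJ (n + 1)) ((besselJ n z - besselJ (n + 2) z) / 2) z := by
  have h := hasDerivAt_besselJ_tsum (n + 1) z
  have heq : ∑' m, bj' (n + 1) m z = (besselJ n z - besselJ (n + 2) z) / 2 := by
    calc ∑' m, bj' (n + 1) m z = ∑' m, (bj n m z - sh (n + 2) z m) / 2 :=
          tsum_congr fun m => bj'_eq_step n m z
      _ = (∑' m, (bj n m z - sh (n + 2) z m)) / 2 := tsum_div_const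
      _ = (besselJ n z - besselJ (n + 2) z) / 2 := by
          rw [Summable.tsum_sub (summable_bj n z) (summable_sh (n + 2) z),
            tsum_sh, ← besselJ_eq]
  rwa [heq] at h

lemma recur_step (n m : ℕ) (z : ℝ) :
    z * (bj n m z + sh (n + 2) z m) = 2 * ((n : ℝ) + 1) * bj (n + 1) m z := by
  match m with
  | 0 =>
    simp only [bj, sh, if_pos rfl, add_zero]
    simp only [Nat.factorial_succ, Nat.zero_add, Nat.factorial_zero]
    have h1 : ((n.factorial : ℝ)) ≠ 0 := by positivity
    have h2 : ((n : ℝ) + 1) ≠ 0 := by positivity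
    have hp : (z / 2) ^ (2 * 0 + (n + 1)) = (z / 2) ^ (2 * 0 + n) * (z / 2) := by
      rw [show 2 * 0 + (n + 1) = (2 * 0 + n) + 1 from by omega, pow_succ]
    rw [hp]
    push_cast
    field_simp
    ring
  | k + 1 =>
    simp only [bj, sh, Nat.add_eq_zero, one_ne_zero, and_false, if_false, Nat.add_sub_cancel]
    have e1 : (k + 1) + n = (k + n) + 1 := by omega
    have e4 : k + (n + 2) = (k + n + 1) + 1 := by omega
    have e5 : 2 * (k + 1) + n = (2 * k + n + 2) := by omega
    have e6 : 2 * k + (n + 2) = 2 * k + n + 2 := by omega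
    have e7 : (k + 1) + (n + 1) = (k + n + 1) + 1 := by omega
    have e8 : 2 * (k + 1) + (n + 1) = (2 * k + n + 2) + 1 := by omega
    have e9 : k + n + 1 = (k + n) + 1 := rfl
    rw [e1, e4, e5, e6, e7, e8]
    simp only [Nat.factorial_succ, e9]
    have hp : (z / 2) ^ ((2 * k + n + 2) + 1) = (z / 2) ^ (2 * k + n + 2) * (z / 2) := by
      rw [← pow_succ]
    rw [hp]
    have h1 : ((k.factorial : ℝ)) ≠ 0 := by positivity
    have h2 : (((k + n).factorial : ℝ)) ≠ 0 := by positivity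
    have h3 : ((k : ℝ) + 1) ≠ 0 := by positivity
    have h4 : ((k : ℝ) + (n : ℝ) + 1) ≠ 0 := by positivity
    have h5 : ((k : ℝ) + (n : ℝ) + 2) ≠ 0 := by positivity
    push_cast
    field_simp
    ring

lemma besselJ_recur (n : ℕ) (z : ℝ) :
    z * (besselJ n z + besselJ (n + 2) z) = 2 * ((n : ℝ) + 1) * besselJ (n + 1) z := by
  have : z * (besselJ n z + besselJ (n + 2) z)
      = ∑' m, z * (bj n m z + sh (n + 2) z m) := by
    rw [tsum_mul_left, Summable.tsum_add (summable_bj n z) (summable_sh (n + 2) z),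
      tsum_sh, ← besselJ_eq]
  rw [this]
  calc ∑' m, z * (bj n m z + sh (n + 2) z m)
      = ∑' m, 2 * ((n : ℝ) + 1) * bj (n + 1) m z := tsum_congr fun m => recur_step n m z
    _ = 2 * ((n : ℝ) + 1) * besselJ (n + 1) z := by rw [tsum_mul_left, ← besselJ_eq]

lemma sq_pow_eq (a : ℝ) (n : ℕ) : ((a ^ 2) ^ n) = a ^ n * a ^ n := by
  rw [← pow_mul, two_mul, pow_add]

lemma pow_sq_comm (a : ℝ) (n : ℕ) : ((a ^ 2) ^ n) = (a ^ n) ^ 2 := by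
  rw [← pow_mul, ← pow_mul, Nat.mul_comm]

lemma summable_besselJ_sq (z : ℝ) : Summable (fun n : ℕ => besselJ n z ^ 2) := by
  set R : ℝ := |z| + 2 with hRdef
  have hzR : |z| ≤ R := by rw [hRdef]; linarith
  refine Summable.of_nonneg_of_le (fun n => sq_nonneg _) (fun n => ?_)
    ((Real.summable_pow_div_factorial ((R / 2) ^ 2)).mul_left ((KK R) ^ 2))
  have hb := besselJ_abs_le n hzR
  have h1 : besselJ n z ^ 2 ≤ ((R / 2) ^ n / n.factorial * KK R) ^ 2 := by
    rw [← sq_abs]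
    exact pow_le_pow_left₀ (abs_nonneg _) hb 2
  refine h1.trans ?_
  have hfac1 : (1 : ℝ) ≤ n.factorial := by exact_mod_cast n.factorial_pos
  have hKK := KK_nonneg R
  have hR0 : (0:ℝ) ≤ R / 2 := by positivity
  calc ((R / 2) ^ n / (n.factorial : ℝ) * KK R) ^ 2
      = ((R / 2) ^ n) ^ 2 * KK R ^ 2 / ((n.factorial : ℝ)) ^ 2 := by ring
    _ ≤ ((R / 2) ^ n) ^ 2 * KK R ^ 2 / ((n.factorial : ℝ)) := by
        apply div_le_div_of_nonneg_left (by positivity) (by positivity)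
        nlinarith
    _ = KK R ^ 2 * (((R / 2) ^ 2) ^ n / (n.factorial : ℝ)) := by
        rw [sq_pow_eq]; ring

lemma telescope (z : ℝ) :
    ∑' n : ℕ, (besselJ n z ^ 2 - besselJ (n + 2) z ^ 2) = besselJ 0 z ^ 2 + besselJ 1 z ^ 2 := by
  have hs := summable_besselJ_sq z
  have hs2 : Summable (fun n : ℕ => besselJ (n + 2) z ^ 2) := (summable_nat_add_iff 2).mpr hs
  rw [Summable.tsum_sub hs hs2]
  have h := Summable.sum_add_tsum_nat_add 2 hs
  have h2 : ∑ i ∈ Finset.range 2, besselJ i z ^ 2 = besselJ 0 z ^ 2 + besselJ 1 z ^ 2 := by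
    simp [Finset.sum_range_succ]
  linarith [h, h2]

lemma besselJ_abs_le_simple (n : ℕ) {y R : ℝ} (hy : |y| ≤ R) :
    |besselJ n y| ≤ (R / 2) ^ n * KK R := by
  have hR : 0 ≤ R := (abs_nonneg y).trans hy
  refine (besselJ_abs_le n hy).trans ?_
  have h1 : (R / 2) ^ n / (n.factorial : ℝ) ≤ (R / 2) ^ n :=
    div_le_self (by positivity) (by exact_mod_cast n.factorial_pos)
  exact mul_le_mul_of_nonneg_right h1 (KK_nonneg R)

lemma besselJ_abs_le_div (n : ℕ) {y R : ℝ} (hy : |y| ≤ R) :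
    |besselJ (n + 1) y| ≤ (R / 2) ^ (n + 1) / n.factorial * KK R := by
  have hR : 0 ≤ R := (abs_nonneg y).trans hy
  refine (besselJ_abs_le (n + 1) hy).trans ?_
  have h1 : (R / 2) ^ (n + 1) / (((n + 1).factorial : ℕ) : ℝ) ≤ (R / 2) ^ (n + 1) / n.factorial := by
    apply div_le_div_of_nonneg_left (by positivity) (by positivity)
    exact_mod_cast Nat.factorial_le (Nat.le_succ n)
  exact mul_le_mul_of_nonneg_right h1 (KK_nonneg R)

theorem deriv_sum_4n_besselJ_sq (z : ℝ) (hz : 0 < z) :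
    HasDerivAt (fun w => ∑' n : ℕ, 4 * ((n : ℝ) + 1) * besselJ (n + 1) w ^ 2)
      (2 * z * (besselJ 0 z ^ 2 + besselJ 1 z ^ 2)) z := by
  set R : ℝ := z + 2 with hRdef
  have hR2 : (2:ℝ) ≤ R := by rw [hRdef]; linarith
  have hR0 : (0:ℝ) < R / 2 := by linarith
  have hKK := KK_nonneg R
  have hzmem : z ∈ Metric.ball (0:ℝ) R := by
    simp only [Metric.mem_ball, Real.dist_eq, sub_zero, hRdef]
    rw [abs_of_pos hz]; linarith
  have hzR : |z| ≤ R := by rw [abs_of_pos hz, hRdef]; linarith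
  set q : ℝ := (R / 2) ^ 2 with hqdef
  set C : ℝ := 4 * (KK R) ^ 2 * (R / 2) * (1 + (R / 2) ^ 2) with hCdef
  have hrr : (R / 2) ^ 2 ≤ (R / 2) * (1 + (R / 2) ^ 2) := by nlinarith [sq_nonneg (R / 2 - 1)]
  have hu : Summable (fun n : ℕ => C * (((n : ℝ) + 1) * q ^ n / n.factorial)) :=
    (master q).mul_left C
  -- derivative of each term
  have hg : ∀ (n : ℕ), ∀ y ∈ Metric.ball (0:ℝ) R,
      HasDerivAt (fun w => 4 * ((n : ℝ) + 1) * besselJ (n + 1) w ^ 2)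
        (4 * ((n : ℝ) + 1) * (besselJ (n + 1) y * (besselJ n y - besselJ (n + 2) y))) y := by
    intro n y _
    have h1 := (besselJ_deriv n y).fun_pow 2
    have h2 := h1.const_mul (4 * ((n : ℝ) + 1))
    exact h2.congr_deriv (by ring)
  -- the bound on derivatives
  have hg' : ∀ (n : ℕ), ∀ y ∈ Metric.ball (0:ℝ) R,
      ‖4 * ((n : ℝ) + 1) * (besselJ (n + 1) y * (besselJ n y - besselJ (n + 2) y))‖
        ≤ C * (((n : ℝ) + 1) * q ^ n / n.factorial) := by
    intro n y hy
    have hyR : |y| ≤ R := by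
      have := Metric.mem_ball.mp hy
      rw [Real.dist_eq, sub_zero] at this
      linarith
    have hfacn : (1 : ℝ) ≤ n.factorial := by exact_mod_cast n.factorial_pos
    have hb1 := besselJ_abs_le_div n hyR
    have hb0 := besselJ_abs_le_simple n hyR
    have hb2 := besselJ_abs_le_simple (n + 2) hyR
    rw [Real.norm_eq_abs]
    have habs0 : |4 * ((n : ℝ) + 1) * (besselJ (n + 1) y * (besselJ n y - besselJ (n + 2) y))|
        = 4 * ((n : ℝ) + 1) * (|besselJ (n + 1) y| * |besselJ n y - besselJ (n + 2) y|) := by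
      rw [abs_mul, abs_of_nonneg (by positivity : (0:ℝ) ≤ 4 * ((n : ℝ) + 1)), abs_mul]
    rw [habs0]
    have hsub : |besselJ n y - besselJ (n + 2) y| ≤ (R / 2) ^ n * KK R + (R / 2) ^ (n + 2) * KK R :=
      (abs_sub _ _).trans (add_le_add hb0 hb2)
    calc 4 * ((n : ℝ) + 1) * (|besselJ (n + 1) y| * |besselJ n y - besselJ (n + 2) y|)
        ≤ 4 * ((n : ℝ) + 1) * (((R / 2) ^ (n + 1) / n.factorial * KK R) *
            ((R / 2) ^ n * KK R + (R / 2) ^ (n + 2) * KK R)) := by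
          apply mul_le_mul_of_nonneg_left
            (mul_le_mul hb1 hsub (abs_nonneg _) (by positivity)) (by positivity)
        _ = C * (((n : ℝ) + 1) * q ^ n / n.factorial) := by
          simp only [hCdef, hqdef, sq_pow_eq]
          field_simp
          ring
  -- summability at the point z
  have hg0 : Summable (fun n : ℕ => 4 * ((n : ℝ) + 1) * besselJ (n + 1) z ^ 2) := by
    apply Summable.of_norm
    refine Summable.of_nonneg_of_le (fun n => norm_nonneg _) (fun n => ?_) hu
    have hfacn : (1 : ℝ) ≤ n.factorial := by exact_mod_cast n.factorial_pos
    have hb1 := besselJ_abs_le_div n hzR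
    rw [Real.norm_eq_abs]
    have habs0 : |4 * ((n : ℝ) + 1) * besselJ (n + 1) z ^ 2|
        = 4 * ((n : ℝ) + 1) * |besselJ (n + 1) z| ^ 2 := by
      rw [abs_mul, abs_of_nonneg (by positivity : (0:ℝ) ≤ 4 * ((n : ℝ) + 1)), abs_pow]
    rw [habs0]
    calc 4 * ((n : ℝ) + 1) * |besselJ (n + 1) z| ^ 2
        ≤ 4 * ((n : ℝ) + 1) * ((R / 2) ^ (n + 1) / n.factorial * KK R) ^ 2 := by
          apply mul_le_mul_of_nonneg_left (pow_le_pow_left₀ (abs_nonneg _) hb1 2) (by positivity)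
      _ = 4 * ((n : ℝ) + 1) * (KK R) ^ 2 * ((R / 2) ^ 2 * ((R / 2) ^ n) ^ 2)
            / ((n.factorial : ℝ)) ^ 2 := by ring
      _ ≤ 4 * ((n : ℝ) + 1) * (KK R) ^ 2 * ((R / 2) ^ 2 * ((R / 2) ^ n) ^ 2)
            / ((n.factorial : ℝ)) := by
          apply div_le_div_of_nonneg_left (by positivity) (by positivity)
          nlinarith
      _ ≤ C * (((n : ℝ) + 1) * q ^ n / n.factorial) := by
          have hrw : C * (((n : ℝ) + 1) * q ^ n / n.factorial)
              = (4 * (KK R) ^ 2 * (R / 2) * (1 + (R / 2) ^ 2) * (((n : ℝ) + 1) * ((R / 2) ^ n) ^ 2))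
                / ((n.factorial : ℝ)) := by
            simp only [hCdef, hqdef, sq_pow_eq]
            ring
          rw [hrw]
          apply div_le_div_of_nonneg_right ?_ (by positivity)
          have h9 := mul_le_mul_of_nonneg_left hrr
            (by positivity : (0:ℝ) ≤ 4 * ((n : ℝ) + 1) * (KK R) ^ 2 * ((R / 2) ^ n) ^ 2)
          nlinarith [h9]
  -- apply the term-by-term differentiation theorem
  have key := hasDerivAt_tsum_of_isPreconnected hu Metric.isOpen_ball
    (convex_ball (0:ℝ) R).isPreconnected hg hg' hzmem hg0 hzmem
  have hfinal : (∑' n : ℕ, 4 * ((n : ℝ) + 1) * (besselJ (n + 1) z * (besselJ n z - besselJ (n + 2) z)))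
      = 2 * z * (besselJ 0 z ^ 2 + besselJ 1 z ^ 2) := by
    have hterm : ∀ n : ℕ, 4 * ((n : ℝ) + 1) * (besselJ (n + 1) z * (besselJ n z - besselJ (n + 2) z))
        = 2 * z * (besselJ n z ^ 2 - besselJ (n + 2) z ^ 2) := by
      intro n
      have h := besselJ_recur n z
      linear_combination (-2) * (besselJ n z - besselJ (n + 2) z) * h
    rw [tsum_congr hterm, tsum_mul_left, telescope]
  rw [hfinal] at key
  exact key
end

section
/- For integers K ≥ 2 and real z with 0 ≤ z ≤ eK/4, the tail sum satisfies Σ_{n=K+1}^∞ n³·J_n(z)² ≤ (K z²/2)·(e z/(2K))^{2K}. -/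
open intervalIntegral Real MeasureTheory

noncomputable def wInt (n m : ℕ) : ℝ := ∫ θ in (0:ℝ)..π, Real.cos θ ^ (2*m) * Real.sin θ ^ (2*n)

lemma contInt (n m : ℕ) : IntervalIntegrable (fun θ : ℝ => Real.cos θ ^ m * Real.sin θ ^ n) MeasureTheory.volume 0 π :=
  Continuous.intervalIntegrable (by continuity) 0 π

lemma wInt_rec (n m : ℕ) : (2*n + 2*m + 2 : ℝ) * wInt n (m+1) = (2*m+1) * wInt n m := by
  have hderiv : ∀ θ : ℝ, HasDerivAt (fun θ => Real.cos θ ^ (2*m+1) * Real.sin θ ^ (2*n+1))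
      ((2*n+1 : ℝ) * (Real.cos θ ^ (2*m+2) * Real.sin θ ^ (2*n)) -
       (2*m+1) * (Real.cos θ ^ (2*m) * Real.sin θ ^ (2*n+2))) θ := by
    intro θ
    have h1 : HasDerivAt (fun θ => Real.cos θ ^ (2*m+1)) ((2*m+1 : ℝ) * Real.cos θ ^ (2*m) * (-Real.sin θ)) θ := by
      simpa using (Real.hasDerivAt_cos θ).fun_pow (2*m+1)
    have h2 : HasDerivAt (fun θ => Real.sin θ ^ (2*n+1)) ((2*n+1 : ℝ) * Real.sin θ ^ (2*n) * Real.cos θ) θ := by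
      simpa using (Real.hasDerivAt_sin θ).fun_pow (2*n+1)
    have := h1.fun_mul h2
    refine this.congr_deriv ?_
    ring
  have hzero : (∫ θ in (0:ℝ)..π, ((2*n+1 : ℝ) * (Real.cos θ ^ (2*m+2) * Real.sin θ ^ (2*n)) -
       (2*m+1) * (Real.cos θ ^ (2*m) * Real.sin θ ^ (2*n+2)))) = 0 := by
    rw [integral_eq_sub_of_hasDerivAt (fun x _ => hderiv x)
      (Continuous.intervalIntegrable (by continuity) 0 π)]
    simp
  have hsplit : (∫ θ in (0:ℝ)..π, ((2*n+1 : ℝ) * (Real.cos θ ^ (2*m+2) * Real.sin θ ^ (2*n)) -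
       (2*m+1) * (Real.cos θ ^ (2*m) * Real.sin θ ^ (2*n+2))))
      = (2*n+1 : ℝ) * wInt n (m+1) - (2*m+1) * (wInt n m - wInt n (m+1)) := by
    rw [integral_sub ((contInt _ _).const_mul _) ((contInt _ _).const_mul _),
      intervalIntegral.integral_const_mul, intervalIntegral.integral_const_mul]
    have e1 : (∫ θ in (0:ℝ)..π, Real.cos θ ^ (2*m+2) * Real.sin θ ^ (2*n)) = wInt n (m+1) := by
      unfold wInt
      norm_num [Nat.mul_succ]
    have e2 : (∫ θ in (0:ℝ)..π, Real.cos θ ^ (2*m) * Real.sin θ ^ (2*n+2)) = wInt n m - wInt n (m+1) := by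
      have hpt : ∀ θ : ℝ, Real.cos θ ^ (2*m) * Real.sin θ ^ (2*n+2)
          = Real.cos θ ^ (2*m) * Real.sin θ ^ (2*n) - Real.cos θ ^ (2*(m+1)) * Real.sin θ ^ (2*n) := by
        intro θ
        have h22 : Real.sin θ ^ (2*n+2) = Real.sin θ ^ (2*n) * (1 - Real.cos θ ^ 2) := by
          rw [pow_add, Real.sin_sq]
        rw [h22, Nat.mul_succ, pow_add]
        ring
      simp_rw [hpt]
      rw [integral_sub (contInt _ _) (contInt _ _)]
      rfl
    rw [e1, e2]
  rw [hsplit] at hzero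
  linarith

lemma wInt_pos (n : ℕ) : 0 < wInt n 0 := by
  unfold wInt
  apply intervalIntegral.intervalIntegral_pos_of_pos_on (contInt _ _)
  · intro x hx
    have h := Real.sin_pos_of_pos_of_lt_pi hx.1 hx.2
    simpa using pow_pos h (2*n)
  · exact Real.pi_pos

lemma wInt_closed (n m : ℕ) : wInt n m * (4^m * m.factorial * (m+n).factorial)
    = (2*m).factorial * n.factorial * wInt n 0 := by
  induction m with
  | zero => simp; ring
  | succ m IH =>
    have hrec := wInt_rec n m
    have hf1 : ((m+1).factorial : ℝ) = (m+1) * m.factorial := by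
      rw [Nat.factorial_succ]; push_cast; ring
    have hf2 : ((m+1+n).factorial : ℝ) = (m+n+1) * (m+n).factorial := by
      have : m+1+n = (m+n)+1 := by ring
      rw [this, Nat.factorial_succ]; push_cast; ring
    have hf3 : ((2*(m+1)).factorial : ℝ) = (2*m+2) * (2*m+1) * (2*m).factorial := by
      have : 2*(m+1) = (2*m+1)+1 := by ring
      rw [this, Nat.factorial_succ, Nat.factorial_succ]; push_cast; ring
    push_cast [hf1, hf2, hf3] at *
    linear_combination ((2*(m:ℝ)+2)*4^m*m.factorial*(m+n).factorial) * hrec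
      + ((2*(m:ℝ)+1)*(2*m+2)) * IH

lemma besselJ_eq_integral (n : ℕ) (z : ℝ) :
    (n.factorial : ℝ) * wInt n 0 * besselJ n z
      = (z/2)^n * ∫ θ in (0:ℝ)..π, Real.cos (z * Real.cos θ) * Real.sin θ ^ (2*n) := by
  set μ := MeasureTheory.volume.restrict (Set.Ioc (0:ℝ) π) with hμ
  set F : ℕ → ℝ → ℝ := fun m θ =>
    ((-1:ℝ)^m * (z * Real.cos θ)^(2*m) / (2*m).factorial) * Real.sin θ ^ (2*n) with hF
  have hFcont : ∀ m, Continuous (F m) := by intro m; continuity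
  have hFint : ∀ m, Integrable (F m) μ := fun m => (hFcont m).integrableOn_Ioc
  have hFnorm : ∀ m, (∫ θ, ‖F m θ‖ ∂μ) ≤ |z|^(2*m) / (2*m).factorial * π := by
    intro m
    have hb : ∀ θ, ‖F m θ‖ ≤ |z|^(2*m) / (2*m).factorial := by
      intro θ
      rw [hF]
      simp only [Real.norm_eq_abs]
      rw [abs_mul, abs_div, abs_mul, abs_pow, abs_pow, abs_pow, abs_mul]
      have h1 : |Real.cos θ| ≤ 1 := Real.abs_cos_le_one θ
      have h2 : |Real.sin θ| ≤ 1 := Real.abs_sin_le_one θ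
      have h3 : |(-1:ℝ)|^m = 1 := by simp
      rw [h3, one_mul, abs_of_nonneg (by positivity : (0:ℝ) ≤ ((2*m).factorial : ℝ))]
      calc (|z| * |Real.cos θ|)^(2*m) / (2*m).factorial * |Real.sin θ|^(2*n)
          ≤ (|z| * 1)^(2*m) / (2*m).factorial * 1^(2*n) := by
            gcongr <;> first
              | exact Real.abs_cos_le_one θ
              | exact Real.abs_sin_le_one θ
              | positivity
        _ = |z|^(2*m) / (2*m).factorial := by simp
    calc (∫ θ, ‖F m θ‖ ∂μ) ≤ ∫ _θ, |z|^(2*m) / (2*m).factorial ∂μ := by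
          apply integral_mono ((hFint m).norm) (integrable_const _) hb
      _ = |z|^(2*m) / (2*m).factorial * π := by
          simp [hμ, Real.volume_Ioc, Real.pi_pos.le, mul_comm]
  have hsum : Summable (fun m => |z|^(2*m) / ((2*m).factorial : ℝ) * π) := by
    apply Summable.mul_right
    have h := Real.summable_pow_div_factorial |z|
    exact h.comp_injective (fun a b h => by omega)
  have hnormsum : Summable fun m => ∫ θ, ‖F m θ‖ ∂μ := by
    apply Summable.of_nonneg_of_le (fun m => integral_nonneg (fun θ => norm_nonneg _)) hFnorm hsum
  have hswap := MeasureTheory.integral_tsum_of_summable_integral_norm hFint hnormsum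
  have hpt : ∀ θ : ℝ, (∑' m, F m θ) = Real.cos (z * Real.cos θ) * Real.sin θ ^ (2*n) := by
    intro θ
    have := (Real.hasSum_cos (z * Real.cos θ)).mul_right (Real.sin θ ^ (2*n))
    exact this.tsum_eq
  have hone : ∀ m, (∫ θ, F m θ ∂μ) = ((n.factorial : ℝ) * wInt n 0) *
      ((-1:ℝ)^m / (m.factorial * (m+n).factorial) * (z/2)^(2*m)) := by
    intro m
    have : (∫ θ, F m θ ∂μ) = ((-1:ℝ)^m * z^(2*m) / (2*m).factorial) * wInt n m := by
      rw [hμ, ← intervalIntegral.integral_of_le Real.pi_pos.le]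
      unfold wInt
      rw [← intervalIntegral.integral_const_mul]
      apply intervalIntegral.integral_congr
      intro θ _
      rw [hF]
      simp only
      rw [mul_pow]
      ring
    rw [this]
    have hcl := wInt_closed n m
    have h4 : (0:ℝ) < 4^m * m.factorial * (m+n).factorial := by positivity
    have hw : wInt n m = ((2*m).factorial * n.factorial * wInt n 0) / (4^m * m.factorial * (m+n).factorial) := by
      field_simp at hcl ⊢
      linarith [hcl]
    rw [hw]
    have hz4 : (z/2)^(2*m) = z^(2*m) / 4^m := by
      rw [div_pow, pow_mul, pow_mul]
      norm_num
    rw [hz4]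
    have hfac : ((2*m).factorial : ℝ) > 0 := by positivity
    field_simp
  have hbes : besselJ n z = (z/2)^n * ∑' m, ((-1:ℝ)^m / (m.factorial * (m+n).factorial) * (z/2)^(2*m)) := by
    rw [besselJ, ← tsum_mul_left]
    apply tsum_congr
    intro m
    rw [pow_add]
    ring
  calc (n.factorial : ℝ) * wInt n 0 * besselJ n z
      = (z/2)^n * ∑' m, ((n.factorial : ℝ) * wInt n 0) *
          ((-1:ℝ)^m / (m.factorial * (m+n).factorial) * (z/2)^(2*m)) := by
        rw [hbes, tsum_mul_left]; ring
    _ = (z/2)^n * ∑' m, (∫ θ, F m θ ∂μ) := by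
        congr 1; exact (tsum_congr fun m => (hone m).symm)
    _ = (z/2)^n * ∫ θ, (∑' m, F m θ) ∂μ := by rw [hswap]
    _ = (z/2)^n * ∫ θ in (0:ℝ)..π, Real.cos (z * Real.cos θ) * Real.sin θ ^ (2*n) := by
        rw [intervalIntegral.integral_of_le Real.pi_pos.le]
        congr 1
        exact integral_congr_ae (Filter.Eventually.of_forall hpt)

lemma abs_besselJ_le (n : ℕ) (z : ℝ) (hz : 0 ≤ z) :
    |besselJ n z| ≤ (z/2)^n / n.factorial := by
  have hrep := besselJ_eq_integral n z
  have hw := wInt_pos n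
  have hIb : |∫ θ in (0:ℝ)..π, Real.cos (z * Real.cos θ) * Real.sin θ ^ (2*n)| ≤ wInt n 0 := by
    calc |∫ θ in (0:ℝ)..π, Real.cos (z * Real.cos θ) * Real.sin θ ^ (2*n)|
        ≤ ∫ θ in (0:ℝ)..π, |Real.cos (z * Real.cos θ) * Real.sin θ ^ (2*n)| :=
          intervalIntegral.abs_integral_le_integral_abs Real.pi_pos.le
      _ ≤ ∫ θ in (0:ℝ)..π, Real.sin θ ^ (2*n) := by
          apply intervalIntegral.integral_mono_on Real.pi_pos.le
            ((Continuous.intervalIntegrable (by continuity) 0 π).abs)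
            (Continuous.intervalIntegrable (by continuity) 0 π)
          intro x _
          rw [abs_mul]
          have h1 : |Real.cos (z * Real.cos x)| ≤ 1 := Real.abs_cos_le_one _
          have h2 : |Real.sin x ^ (2*n)| = Real.sin x ^ (2*n) := by
            rw [abs_of_nonneg]
            rw [pow_mul]
            positivity
          rw [h2]
          have h3 : 0 ≤ Real.sin x ^ (2*n) := by rw [pow_mul]; positivity
          exact mul_le_of_le_one_left h3 h1
      _ = wInt n 0 := by unfold wInt; norm_num
  have hfac : (0:ℝ) < n.factorial := by positivity
  have h4 : (n.factorial : ℝ) * wInt n 0 * |besselJ n z| ≤ (z/2)^n * wInt n 0 := by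
    have hnn : (0:ℝ) ≤ (n.factorial : ℝ) * wInt n 0 := by positivity
    rw [← abs_of_nonneg hnn, ← abs_mul, hrep, abs_mul,
      abs_of_nonneg (by positivity : (0:ℝ) ≤ (z/2)^n)]
    exact mul_le_mul_of_nonneg_left hIb (by positivity)
  rw [le_div_iff₀ hfac]
  nlinarith [h4, hw]


lemma fact_lb (k : ℕ) : ((k:ℝ)+1)^(k+1) ≤ Real.exp 1 ^ k * (k+1).factorial := by
  induction k with
  | zero => norm_num
  | succ k IH =>
    have hstep : ((k:ℝ)+2)^(k+1) ≤ Real.exp 1 * ((k:ℝ)+1)^(k+1) := by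
      have h1 : ((k:ℝ)+2) ≤ Real.exp (1/((k:ℝ)+1)) * ((k:ℝ)+1) := by
        have := Real.add_one_le_exp (1/((k:ℝ)+1))
        have hk1 : (0:ℝ) < (k:ℝ)+1 := by positivity
        calc ((k:ℝ)+2) = (1/((k:ℝ)+1) + 1) * ((k:ℝ)+1) := by field_simp; ring
          _ ≤ Real.exp (1/((k:ℝ)+1)) * ((k:ℝ)+1) := by
              apply mul_le_mul_of_nonneg_right this hk1.le
      calc ((k:ℝ)+2)^(k+1) ≤ (Real.exp (1/((k:ℝ)+1)) * ((k:ℝ)+1))^(k+1) := by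
            apply pow_le_pow_left₀ (by positivity) h1
        _ = Real.exp (1/((k:ℝ)+1))^(k+1) * ((k:ℝ)+1)^(k+1) := mul_pow _ _ _
        _ = Real.exp 1 * ((k:ℝ)+1)^(k+1) := by
            congr 1
            rw [← Real.exp_nat_mul]
            congr 1
            push_cast
            field_simp
    have hfs : (((k+1)+1).factorial : ℝ) = ((k:ℝ)+2) * ((k+1).factorial : ℝ) := by
      rw [Nat.factorial_succ]; push_cast; ring
    have he : (0:ℝ) < Real.exp 1 := Real.exp_pos 1
    push_cast
    calc ((k:ℝ)+1+1)^(k+1+1) = ((k:ℝ)+2) * ((k:ℝ)+2)^(k+1) := by ring_nf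
      _ ≤ ((k:ℝ)+2) * (Real.exp 1 * ((k:ℝ)+1)^(k+1)) := by
          apply mul_le_mul_of_nonneg_left hstep (by positivity)
      _ ≤ ((k:ℝ)+2) * (Real.exp 1 * (Real.exp 1 ^ k * (k+1).factorial)) := by
          have := mul_le_mul_of_nonneg_left IH he.le
          apply mul_le_mul_of_nonneg_left _ (by positivity : (0:ℝ) ≤ (k:ℝ)+2)
          exact this
      _ = Real.exp 1 ^ (k+1) * (((k+1)+1).factorial : ℝ) := by
          rw [hfs]
          ring

set_option maxHeartbeats 3200000 in
theorem besselJ_tail_sum_upper (K : ℕ) (hK : 2 ≤ K) (z : ℝ) (hz0 : 0 ≤ z)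
    (hz : z ≤ Real.exp 1 * K / 4) :
    ∑' n : ℕ, ((n + K + 1 : ℕ) : ℝ) ^ 3 * besselJ (n + K + 1) z ^ 2
      ≤ (K * z ^ 2 / 2) * (Real.exp 1 * z / (2 * K)) ^ (2 * K) := by
  have hKR : (2:ℝ) ≤ (K:ℝ) := by exact_mod_cast hK
  have hKpos : (0:ℝ) < K := by linarith
  have hRHS0 : (0:ℝ) ≤ (K * z ^ 2 / 2) * (Real.exp 1 * z / (2 * K)) ^ (2 * K) :=
    mul_nonneg (by positivity)
      (pow_nonneg (div_nonneg (mul_nonneg (Real.exp_pos 1).le hz0) (by positivity)) _)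
  set b : ℕ → ℝ := fun n => (n:ℝ)^3 * ((z/2)^n / (n.factorial:ℝ))^2 with hb
  have hbnn : ∀ n, 0 ≤ b n := by intro n; rw [hb]; positivity
  -- step 1
  have step1 : ∀ n : ℕ, (n:ℝ)^3 * besselJ n z ^ 2 ≤ b n := by
    intro n
    rw [hb]
    have h1 : besselJ n z ^ 2 ≤ ((z/2)^n / (n.factorial:ℝ))^2 := by
      rw [← sq_abs]
      apply pow_le_pow_left₀ (abs_nonneg _) (abs_besselJ_le n z hz0)
    exact mul_le_mul_of_nonneg_left h1 (by positivity)
  -- step 2 : ratio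
  have hzsq : z^2 ≤ Real.exp 1 ^2 * (K:ℝ)^2 / 16 := by
    nlinarith [mul_self_nonneg (z - Real.exp 1 * K / 4), Real.exp_pos 1]
  have hc2 : Real.exp 1 ^ 2 ≤ 7.3890561 := by
    nlinarith [Real.exp_one_lt_d9, Real.exp_pos 1]
  have step2 : ∀ n : ℕ, K ≤ n → 3 ≤ n → b (n+1) ≤ (3/10) * b n := by
    intro n hKn h3n
    have hnR : (K:ℝ) ≤ (n:ℝ) := by exact_mod_cast hKn
    have h3R : (3:ℝ) ≤ (n:ℝ) := by exact_mod_cast h3n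
    have hfne : ((n.factorial:ℝ)) ≠ 0 := by positivity
    have hb1 : b (n+1) = ((n:ℝ)+1) * (z/2)^2 * ((z/2)^n / (n.factorial:ℝ))^2 := by
      rw [hb]
      simp only [Nat.factorial_succ]
      push_cast
      field_simp
      ring
    rw [hb1, hb]
    have hkey : ((n:ℝ)+1) * (z/2)^2 ≤ (3/10) * (n:ℝ)^3 := by
      have hz2n : z^2 ≤ 7.3890561 * (n:ℝ)^2 / 16 := by
        nlinarith [hzsq, hc2, Real.exp_pos 1, sq_nonneg (Real.exp 1)]
      nlinarith [hz2n, h3R, sq_nonneg ((n:ℝ))]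
    have hw : (0:ℝ) ≤ ((z/2)^n / (n.factorial:ℝ))^2 := by positivity
    calc ((n:ℝ)+1) * (z/2)^2 * ((z/2)^n / (n.factorial:ℝ))^2
        ≤ (3/10) * (n:ℝ)^3 * ((z/2)^n / (n.factorial:ℝ))^2 :=
          mul_le_mul_of_nonneg_right hkey hw
      _ = (3/10) * ((n:ℝ)^3 * ((z/2)^n / (n.factorial:ℝ))^2) := by ring
  -- step 3 : geometric decay
  have step3 : ∀ j : ℕ, b (K+1+j) ≤ b (K+1) * (3/10)^j := by
    intro j
    induction j with
    | zero => simp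
    | succ j IH =>
      have h1 : K + 1 + (j+1) = (K+1+j) + 1 := by omega
      rw [h1]
      calc b ((K+1+j)+1) ≤ (3/10) * b (K+1+j) := step2 _ (by omega) (by omega)
        _ ≤ (3/10) * (b (K+1) * (3/10)^j) := by
            apply mul_le_mul_of_nonneg_left IH (by norm_num)
        _ = b (K+1) * (3/10)^(j+1) := by ring
  -- step 4 : termwise bound
  have step4 : ∀ n : ℕ, ((n + K + 1 : ℕ) : ℝ) ^ 3 * besselJ (n + K + 1) z ^ 2
      ≤ b (K+1) * (3/10)^n := by
    intro n
    have h1 := step1 (n + K + 1)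
    have h2 : n + K + 1 = K + 1 + n := by omega
    calc ((n + K + 1 : ℕ) : ℝ) ^ 3 * besselJ (n + K + 1) z ^ 2 ≤ b (n+K+1) := h1
      _ = b (K+1+n) := by rw [h2]
      _ ≤ b (K+1) * (3/10)^n := step3 n
  -- final numeric bound
  have hfl := fact_lb K
  have hppos : (0:ℝ) < ((K:ℝ)+1)^(K+1) := by positivity
  have hfpos : (0:ℝ) < ((K+1).factorial : ℝ) := by positivity
  have h1 : (z/2)^(K+1)/(((K+1).factorial:ℝ)) ≤ (z/2)^(K+1) * Real.exp 1 ^ K / ((K:ℝ)+1)^(K+1) := by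
    rw [div_le_div_iff₀ hfpos hppos]
    nlinarith [mul_le_mul_of_nonneg_left hfl (by positivity : (0:ℝ) ≤ (z/2)^(K+1))]
  have hbK : b (K+1) ≤ ((K:ℝ)+1)^3 * ((z/2)^(K+1) * Real.exp 1 ^ K / ((K:ℝ)+1)^(K+1))^2 := by
    have hsq : ((z/2)^(K+1)/(((K+1).factorial:ℝ)))^2
        ≤ ((z/2)^(K+1) * Real.exp 1 ^ K / ((K:ℝ)+1)^(K+1))^2 :=
      pow_le_pow_left₀ (by positivity) h1 2
    have := mul_le_mul_of_nonneg_left hsq (by positivity : (0:ℝ) ≤ ((K:ℝ)+1)^3)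
    rw [hb]
    push_cast
    exact this
  have key : 20*((K:ℝ)+1)^3*(K:ℝ)^(2*K) ≤ 28*(K:ℝ)*((K:ℝ)+1)^(2*K+2) := by
    have hKne : (K:ℝ) ≠ 0 := by linarith
    have h0 : (1:ℝ) + ((2*K : ℕ):ℝ) * (1/(K:ℝ)) ≤ (1 + 1/(K:ℝ))^(2*K) :=
      one_add_mul_le_pow (by
        have : (0:ℝ) ≤ 1/(K:ℝ) := by positivity
        linarith) (2*K)
    have h0' : (3:ℝ) ≤ (1 + 1/(K:ℝ))^(2*K) := by
      have : ((2*K : ℕ):ℝ) * (1/(K:ℝ)) = 2 := by push_cast; field_simp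
      linarith [h0, this.symm.le, this.le]
    have hB : 3*(K:ℝ)^(2*K) ≤ ((K:ℝ)+1)^(2*K) := by
      have hmp : (1 + 1/(K:ℝ))^(2*K) * (K:ℝ)^(2*K) = ((K:ℝ)+1)^(2*K) := by
        rw [← mul_pow]
        congr 1
        field_simp
      have hKp : (0:ℝ) ≤ (K:ℝ)^(2*K) := by positivity
      nlinarith [mul_le_mul_of_nonneg_right h0' hKp]
    have hsplit : ((K:ℝ)+1)^(2*K+2) = ((K:ℝ)+1)^(2*K)*((K:ℝ)+1)^2 := by ring
    rw [hsplit]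
    have hKp : (0:ℝ) ≤ (K:ℝ)^(2*K) := by positivity
    have hA : 20*((K:ℝ)+1)^3 ≤ 84*(K:ℝ)*((K:ℝ)+1)^2 := by
      nlinarith [mul_nonneg (by positivity : (0:ℝ) ≤ ((K:ℝ)+1)^2) (by linarith : (0:ℝ) ≤ 64*(K:ℝ)-20)]
    calc 20*((K:ℝ)+1)^3*(K:ℝ)^(2*K) ≤ (84*(K:ℝ)*((K:ℝ)+1)^2)*(K:ℝ)^(2*K) :=
          mul_le_mul_of_nonneg_right hA hKp
      _ = (28*(K:ℝ)*((K:ℝ)+1)^2)*(3*(K:ℝ)^(2*K)) := by ring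
      _ ≤ (28*(K:ℝ)*((K:ℝ)+1)^2)*(((K:ℝ)+1)^(2*K)) :=
          mul_le_mul_of_nonneg_left hB (by positivity)
      _ = 28*(K:ℝ)*(((K:ℝ)+1)^(2*K)*((K:ℝ)+1)^2) := by ring
  -- final assembly of step 6
  have step6 : b (K+1) * (10/7) ≤ (K * z ^ 2 / 2) * (Real.exp 1 * z / (2 * K)) ^ (2 * K) := by
    have hKne : (K:ℝ) ≠ 0 := by linarith
    have hexp : (K+1)*2 = 2*K+2 := by ring
    have q : ∀ (a:ℝ), (a^(K+1))^2 = a^(2*K+2) := fun a => by rw [← pow_mul, hexp]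
    have q2 : ∀ (a:ℝ), (a^K)^2 = a^(2*K) := fun a => by
      rw [← pow_mul, (by ring : K*2 = 2*K)]
    have eL : ((K:ℝ)+1)^3 * ((z/2)^(K+1) * Real.exp 1 ^ K / ((K:ℝ)+1)^(K+1))^2 * (10/7)
        = (10 * ((K:ℝ)+1)^3 * ((z/2)^(2*K+2) * Real.exp 1 ^(2*K))) / (7 * ((K:ℝ)+1)^(2*K+2)) := by
      have hPne : ((K:ℝ)+1)^(K+1) ≠ 0 := by positivity
      have hPne2 : ((K:ℝ)+1)^(2*K+2) ≠ 0 := by positivity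
      rw [div_pow, mul_pow, q (z/2), q2 (Real.exp 1), q ((K:ℝ)+1)]
      field_simp
    have eR : (K * z ^ 2 / 2) * (Real.exp 1 * z / (2 * (K:ℝ))) ^ (2 * K)
        = (2 * (K:ℝ) * ((z/2)^(2*K+2) * Real.exp 1 ^(2*K))) / (K:ℝ)^(2*K) := by
      have h3 : Real.exp 1 * z / (2 * (K:ℝ)) = (z/2) * Real.exp 1 / (K:ℝ) := by
        field_simp
      rw [h3, div_pow, mul_pow]
      field_simp
      ring
    calc b (K+1) * (10/7)
        ≤ ((K:ℝ)+1)^3 * ((z/2)^(K+1) * Real.exp 1 ^ K / ((K:ℝ)+1)^(K+1))^2 * (10/7) :=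
          mul_le_mul_of_nonneg_right hbK (by norm_num)
      _ = (10 * ((K:ℝ)+1)^3 * ((z/2)^(2*K+2) * Real.exp 1 ^(2*K))) / (7 * ((K:ℝ)+1)^(2*K+2)) := eL
      _ ≤ (2 * (K:ℝ) * ((z/2)^(2*K+2) * Real.exp 1 ^(2*K))) / (K:ℝ)^(2*K) := by
          rw [div_le_div_iff₀ (by positivity) (by positivity)]
          have hc0 : (0:ℝ) ≤ (z/2)^(2*K+2) * Real.exp 1 ^(2*K) := by positivity
          calc 10 * ((K:ℝ)+1)^3 * ((z/2)^(2*K+2) * Real.exp 1 ^(2*K)) * (K:ℝ)^(2*K)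
              = ((z/2)^(2*K+2) * Real.exp 1 ^(2*K)) * (10*((K:ℝ)+1)^3*(K:ℝ)^(2*K)) / 2 * 2 := by
                ring
            _ ≤ ((z/2)^(2*K+2) * Real.exp 1 ^(2*K)) * (14*(K:ℝ)*((K:ℝ)+1)^(2*K+2)) / 2 * 2 := by
                have h5 : ((z/2)^(2*K+2) * Real.exp 1 ^(2*K)) * (20*((K:ℝ)+1)^3*(K:ℝ)^(2*K))
                    ≤ ((z/2)^(2*K+2) * Real.exp 1 ^(2*K)) * (28*(K:ℝ)*((K:ℝ)+1)^(2*K+2)) :=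
                  mul_le_mul_of_nonneg_left key hc0
                nlinarith [h5]
            _ = 2 * (K:ℝ) * ((z/2)^(2*K+2) * Real.exp 1 ^(2*K)) * (7 * ((K:ℝ)+1)^(2*K+2)) := by
                ring
      _ = (K * z ^ 2 / 2) * (Real.exp 1 * z / (2 * (K:ℝ))) ^ (2 * K) := eR.symm
  -- conclude
  by_cases hsf : Summable (fun n : ℕ => ((n + K + 1 : ℕ) : ℝ) ^ 3 * besselJ (n + K + 1) z ^ 2)
  · have hg : Summable (fun n : ℕ => b (K+1) * (3/10:ℝ)^n) :=
      (summable_geometric_of_lt_one (by norm_num) (by norm_num)).mul_left _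
    calc ∑' n : ℕ, ((n + K + 1 : ℕ) : ℝ) ^ 3 * besselJ (n + K + 1) z ^ 2
        ≤ ∑' n : ℕ, b (K+1) * (3/10:ℝ)^n := Summable.tsum_le_tsum step4 hsf hg
      _ = b (K+1) * (10/7) := by
          rw [tsum_mul_left, tsum_geometric_of_lt_one (by norm_num) (by norm_num)]
          norm_num
      _ ≤ (K * z ^ 2 / 2) * (Real.exp 1 * z / (2 * K)) ^ (2 * K) := step6
  · rw [tsum_eq_zero_of_not_summable hsf]
    exact hRHS0
end

section
/- Let h : ℝ → ℂ be 2π-periodic, extend to a bounded holomorphic function on the strip D = {x + iy : x ∈ ℝ, |y| < a} for some a > 0, with M = sup_D |h|. Then for every positive integer N, |(1/N)·Σ_{j=0}^{N−1} h(2πj/N) − (1/(2π))·∫_0^{2π} h(φ) dφ| ≤ 2M/(e^{aN} − 1). -/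
open Complex Set intervalIntegral
open scoped Real Interval

lemma strip_open (a : ℝ) : IsOpen {w : ℂ | |w.im| < a} := by
  have : {w : ℂ | |w.im| < a} = Complex.im ⁻¹' (Set.Ioo (-a) a) := by
    ext w; simp [abs_lt]
  rw [this]; exact isOpen_Ioo.preimage Complex.continuous_im

lemma shift_bound (a b M : ℝ) (h : ℂ → ℂ)
    (hhol : DifferentiableOn ℂ h {w : ℂ | |w.im| < a})
    (hper : ∀ w : ℂ, |w.im| < a → h (w + 2 * Real.pi) = h w)
    (hbnd : ∀ w : ℂ, |w.im| < a → ‖h w‖ ≤ M)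
    (hb : 0 < b) (hba : b < a) (n : ℤ) :
    ‖∫ x in (0:ℝ)..(2*Real.pi), Complex.exp (-n * x * Complex.I) * h x‖
      ≤ 2 * Real.pi * (M * Real.exp (-b * n.natAbs)) := by
  set g : ℂ → ℂ := fun z => Complex.exp (-n * z * Complex.I) * h z with hg
  set t : ℝ := if 0 ≤ n then -b else b with ht
  have habs_t : |t| = b := by
    rw [ht]; split <;> simp [abs_of_pos hb]
  have hcast : ((n.natAbs : ℝ)) = |(n : ℝ)| := by
    rw [Nat.cast_natAbs, Int.cast_abs]
  have hnt : (n : ℝ) * t = -(b * n.natAbs) := by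
    rw [hcast]
    rcases le_or_gt 0 n with hn | hn
    · rw [ht, if_pos hn, _root_.abs_of_nonneg (by exact_mod_cast hn : (0:ℝ) ≤ (n:ℝ))]; ring
    · rw [ht, if_neg (not_le.mpr hn), _root_.abs_of_neg (by exact_mod_cast hn : (n:ℝ) < 0)]; ring
  -- the rectangle is inside the strip
  have hsub : [[(0:ℝ), 2*Real.pi]] ×ℂ [[(0:ℝ), t]] ⊆ {w : ℂ | |w.im| < a} := by
    intro z hz
    rw [Complex.mem_reProdIm] at hz
    have hz2 := hz.2
    rw [Set.uIcc_eq_union] at hz2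
    have : |z.im| ≤ b := by
      rcases hz2 with h1 | h1
      · rcases Set.mem_Icc.mp h1 with ⟨h2, h3⟩
        rw [abs_le]
        refine ⟨by linarith, ?_⟩
        calc z.im ≤ t := h3
          _ ≤ |t| := le_abs_self t
          _ = b := habs_t
      · rcases Set.mem_Icc.mp h1 with ⟨h2, h3⟩
        rw [abs_le]
        refine ⟨?_, by linarith⟩
        calc -b = -|t| := by rw [habs_t]
          _ ≤ t := neg_abs_le t
          _ ≤ z.im := h2
    exact lt_of_le_of_lt this hba
  have hstrip_t : ∀ y : ℝ, y ∈ [[(0:ℝ), t]] → |y| < a := by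
    intro y hy
    rw [Set.uIcc_eq_union] at hy
    have : |y| ≤ b := by
      rcases hy with h1 | h1
      · rcases Set.mem_Icc.mp h1 with ⟨h2, h3⟩
        rw [abs_le]
        exact ⟨by linarith, by calc y ≤ t := h3
          _ ≤ |t| := le_abs_self t
          _ = b := habs_t⟩
      · rcases Set.mem_Icc.mp h1 with ⟨h2, h3⟩
        rw [abs_le]
        exact ⟨by calc -b = -|t| := by rw [habs_t]
          _ ≤ t := neg_abs_le t
          _ ≤ y := h2, by linarith⟩
    exact lt_of_le_of_lt this hba
  have hgdiff : DifferentiableOn ℂ g ([[(0:ℝ), 2*Real.pi]] ×ℂ [[(0:ℝ), t]]) := by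
    apply DifferentiableOn.mul
    · exact (Complex.differentiable_exp.comp
        ((differentiable_id.const_mul _).mul_const Complex.I)).differentiableOn
    · exact hhol.mono hsub
  set w : ℂ := ⟨2*Real.pi, t⟩ with hw
  have hwre : w.re = 2*Real.pi := rfl
  have hwim : w.im = t := rfl
  have hrect := Complex.integral_boundary_rect_eq_zero_of_differentiableOn g 0 w (by
    rw [hwre, hwim]; simpa using hgdiff)
  rw [hwre, hwim] at hrect
  simp only [Complex.zero_re, Complex.zero_im] at hrect
  have hvert : (∫ y in (0:ℝ)..t, g (((2*Real.pi : ℝ):ℂ) + y * Complex.I))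
      = ∫ y in (0:ℝ)..t, g (((0:ℝ):ℂ) + y * Complex.I) := by
    apply intervalIntegral.integral_congr
    intro y hy
    have hco : ((2*Real.pi:ℝ):ℂ) = 2*(Real.pi:ℂ) := by push_cast; ring
    rw [hco]
    have hys := hstrip_t y hy
    have hyI : |((y:ℂ) * Complex.I).im| < a := by simpa using hys
    have hexp : Complex.exp (-(n:ℂ) * (2*Real.pi + y * Complex.I) * Complex.I)
        = Complex.exp (-(n:ℂ) * ((0:ℝ) + y * Complex.I) * Complex.I) := by
      have h1 : (-(n:ℂ) * (2*Real.pi + y * Complex.I) * Complex.I)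
          = (-(n:ℂ) * ((0:ℝ) + y * Complex.I) * Complex.I) + (-n : ℤ) * (2 * Real.pi * Complex.I) := by
        push_cast; ring
      rw [h1, Complex.exp_add, Complex.exp_int_mul_two_pi_mul_I, mul_one]
    have hh : h (2*Real.pi + y * Complex.I) = h ((0:ℝ) + y * Complex.I) := by
      have h2 : ((2*Real.pi : ℝ) : ℂ) + y * Complex.I = (y : ℂ) * Complex.I + 2 * Real.pi := by
        push_cast; ring
      have h3 := hper ((y:ℂ) * Complex.I) hyI
      simp only [Complex.ofReal_zero, zero_add]
      calc h (2*Real.pi + y * Complex.I) = h ((y:ℂ) * Complex.I + 2 * Real.pi) := by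
            congr 1; push_cast; ring
        _ = h ((y:ℂ) * Complex.I) := h3
    simp only [hg]
    rw [hexp, hh]
  have hhor : (∫ x in (0:ℝ)..(2*Real.pi), g x) = ∫ x in (0:ℝ)..(2*Real.pi), g (x + t * Complex.I) := by
    have h0 : (∫ x in (0:ℝ)..(2*Real.pi), g (x + ((0:ℝ):ℂ) * Complex.I)) = ∫ x in (0:ℝ)..(2*Real.pi), g x := by
      apply intervalIntegral.integral_congr
      intro x _
      norm_num
    rw [hvert] at hrect
    simp only [smul_eq_mul] at hrect
    have hAB : (∫ x in (0:ℝ)..(2*Real.pi), g (x + ((0:ℝ):ℂ) * Complex.I))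
        = ∫ x in (0:ℝ)..(2*Real.pi), g (x + ((t:ℝ):ℂ) * Complex.I) := by
      have := sub_eq_zero.mp (by linear_combination hrect :
        (∫ x in (0:ℝ)..(2*Real.pi), g (x + ((0:ℝ):ℂ) * Complex.I))
        - (∫ x in (0:ℝ)..(2*Real.pi), g (x + ((t:ℝ):ℂ) * Complex.I)) = 0)
      exact this
    rw [← h0, hAB]
  -- now bound the shifted integral
  have hbound : ∀ x ∈ Set.uIoc (0:ℝ) (2*Real.pi), ‖g (x + t * Complex.I)‖ ≤ M * Real.exp (-b * n.natAbs) := by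
    intro x _
    have him : ((x:ℂ) + (t:ℂ) * Complex.I).im = t := by simp
    have hx_strip : |((x:ℂ) + (t:ℂ) * Complex.I).im| < a := by rw [him, habs_t]; exact hba
    have hre : (-(n:ℂ) * ((x:ℂ) + (t:ℂ) * Complex.I) * Complex.I)
        = ((((n:ℝ) * t : ℝ)) : ℂ) + ((-( (n:ℝ) * x) : ℝ) : ℂ) * Complex.I := by
      push_cast; ring_nf; rw [Complex.I_sq]; ring
    have hnorm_exp : ‖Complex.exp (-(n:ℂ) * ((x:ℂ) + (t:ℂ) * Complex.I) * Complex.I)‖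
        = Real.exp (-(b * n.natAbs)) := by
      rw [hre, Complex.norm_exp]
      congr 1
      simp [hnt]
    simp only [hg]
    rw [norm_mul, hnorm_exp]
    have hM := hbnd _ hx_strip
    calc Real.exp (-(b * n.natAbs)) * ‖h ((x:ℂ) + (t:ℂ) * Complex.I)‖
        ≤ Real.exp (-(b * n.natAbs)) * M :=
          mul_le_mul_of_nonneg_left hM (Real.exp_nonneg _)
      _ = M * Real.exp (-b * n.natAbs) := by rw [neg_mul]; ring
  calc ‖∫ x in (0:ℝ)..(2*Real.pi), Complex.exp (-n * x * Complex.I) * h x‖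
      = ‖∫ x in (0:ℝ)..(2*Real.pi), g (x + t * Complex.I)‖ := by rw [← hhor]
    _ ≤ (M * Real.exp (-b * n.natAbs)) * |2*Real.pi - 0| :=
        intervalIntegral.norm_integral_le_of_norm_le_const hbound
    _ = 2 * Real.pi * (M * Real.exp (-b * n.natAbs)) := by
        rw [sub_zero, abs_of_pos (by positivity)]; ring

lemma fourier_sample_sum (N : ℕ) (hN : 0 < N) (n : ℤ) :
    letI : Fact (0 < 2*Real.pi) := ⟨by positivity⟩
    (∑ j ∈ Finset.range N, (fourier n ((2*Real.pi*j/N : ℝ) : AddCircle (2*Real.pi)) : ℂ))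
      = if (N:ℤ) ∣ n then (N:ℂ) else 0 := by
  letI : Fact (0 < 2*Real.pi) := ⟨by positivity⟩
  have hNR : (N:ℂ) ≠ 0 := by exact_mod_cast hN.ne'
  have hπ : (Real.pi:ℂ) ≠ 0 := by exact_mod_cast Real.pi_ne_zero
  set z : ℂ := Complex.exp (2*Real.pi*Complex.I*n/N) with hz
  have hterm : ∀ j ∈ Finset.range N,
      (fourier n ((2*Real.pi*j/N : ℝ) : AddCircle (2*Real.pi)) : ℂ) = z ^ j := by
    intro j _
    rw [fourier_coe_apply, hz, ← Complex.exp_nat_mul]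
    congr 1
    push_cast
    field_simp
  rw [Finset.sum_congr rfl hterm]
  have hzN : z ^ N = 1 := by
    rw [hz, ← Complex.exp_nat_mul]
    have : (N:ℂ) * (2*Real.pi*Complex.I*n/N) = n * (2*Real.pi*Complex.I) := by
      field_simp
    rw [this]
    exact_mod_cast Complex.exp_int_mul_two_pi_mul_I n
  have hz1 : z = 1 ↔ (N:ℤ) ∣ n := by
    rw [hz, Complex.exp_eq_one_iff]
    constructor
    · rintro ⟨m, hm⟩
      refine ⟨m, ?_⟩
      have : (n:ℂ) = (N:ℂ) * m := by
        field_simp at hm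
        linear_combination hm / (2 * Real.pi * Complex.I) * 0 + (by
          have h2πI : (2:ℂ) * Real.pi * Complex.I ≠ 0 := by
            simp [Real.pi_ne_zero, Complex.I_ne_zero, hπ]
          exact mul_left_cancel₀ h2πI (by linear_combination (2 * Real.pi * Complex.I) * hm) : (n:ℂ) = (N:ℂ)*m)
      exact_mod_cast this
    · rintro ⟨m, rfl⟩
      exact ⟨m, by push_cast; field_simp⟩
  by_cases hdvd : (N:ℤ) ∣ n
  · rw [if_pos hdvd]
    have : z = 1 := hz1.mpr hdvd
    simp [this]
  · rw [if_neg hdvd]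
    have hzne : z ≠ 1 := fun h => hdvd (hz1.mp h)
    rw [geom_sum_eq hzne, hzN]
    simp

theorem periodic_trapezoidal_rule_error (a M : ℝ) (ha : 0 < a) (h : ℂ → ℂ)
    (hhol : DifferentiableOn ℂ h {w : ℂ | |w.im| < a})
    (hper : ∀ w : ℂ, |w.im| < a → h (w + 2 * Real.pi) = h w)
    (hbnd : ∀ w : ℂ, |w.im| < a → ‖h w‖ ≤ M)
    (N : ℕ) (hN : 0 < N) :
    ‖(1 / (N : ℂ)) * ∑ j ∈ Finset.range N, h (2 * Real.pi * j / N)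
        - (1 / (2 * (Real.pi : ℂ))) * ∫ φ in (0 : ℝ)..(2 * Real.pi), h φ‖
      ≤ 2 * M / (Real.exp (a * N) - 1) := by
  haveI : Fact (0 < 2*Real.pi) := ⟨by positivity⟩
  have hM0 : 0 ≤ M := le_trans (norm_nonneg _) (hbnd 0 (by simpa using ha))
  have hcont : Continuous fun x : ℝ => h x := by
    rw [continuous_iff_continuousAt]
    intro x
    have hx : ((x:ℂ)) ∈ {w:ℂ | |w.im| < a} := by simpa using ha
    exact ((hhol.differentiableAt ((strip_open a).mem_nhds hx)).continuousAt).comp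
      Complex.continuous_ofReal.continuousAt
  have hperR : Function.Periodic (fun x : ℝ => h x) (2*Real.pi) := by
    intro x
    have := hper x (by simpa using ha)
    have hc : ((x + 2*Real.pi : ℝ) : ℂ) = (x:ℂ) + 2*Real.pi := by push_cast; ring
    simp only [hc]
    exact this
  set F : C(AddCircle (2*Real.pi), ℂ) :=
    ⟨hperR.lift, by
      rw [(QuotientAddGroup.isQuotientMap_mk _).continuous_iff]
      convert hcont using 1; exact funext fun x => hperR.lift_coe x⟩ with hF
  have hFcoe : ∀ x : ℝ, F ((x : ℝ) : AddCircle (2*Real.pi)) = h x := fun x => hperR.lift_coe x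
  -- Fourier coefficients as concrete integrals
  have hcoeff : ∀ n : ℤ, fourierCoeff (⇑F) n
      = (1/(2*Real.pi) : ℝ) • ∫ x in (0:ℝ)..(2*Real.pi), Complex.exp (-n*x*Complex.I) * h x := by
    intro n
    rw [fourierCoeff_eq_intervalIntegral (⇑F) n 0]
    rw [zero_add]
    congr 1
    apply intervalIntegral.integral_congr
    intro x _
    show (fourier (-n)) (x : AddCircle (2*Real.pi)) • F ((x:ℝ) : AddCircle (2*Real.pi))
      = Complex.exp (-n*x*Complex.I) * h x
    rw [smul_eq_mul, fourier_coe_apply, hFcoe]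
    congr 2
    have hπ : (Real.pi:ℂ) ≠ 0 := by exact_mod_cast Real.pi_ne_zero
    push_cast
    field_simp
  -- decay of Fourier coefficients
  have hdecay : ∀ n : ℤ, ‖fourierCoeff (⇑F) n‖ ≤ M * Real.exp (-a * n.natAbs) := by
    intro n
    have hb' : ∀ b ∈ Set.Ioo (0:ℝ) a, ‖fourierCoeff (⇑F) n‖ ≤ M * Real.exp (-b * n.natAbs) := by
      intro b hb
      rw [hcoeff n, norm_smul]
      have h1 : ‖(1/(2*Real.pi) : ℝ)‖ = 1/(2*Real.pi) := by
        rw [Real.norm_eq_abs, abs_of_pos (by positivity)]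
      rw [h1]
      have h2 := shift_bound a b M h hhol hper hbnd hb.1 hb.2 n
      calc (1/(2*Real.pi)) * ‖∫ x in (0:ℝ)..(2*Real.pi), Complex.exp (-n*x*Complex.I) * h x‖
          ≤ (1/(2*Real.pi)) * (2 * Real.pi * (M * Real.exp (-b * n.natAbs))) := by
            apply mul_le_mul_of_nonneg_left h2 (by positivity)
        _ = M * Real.exp (-b * n.natAbs) := by
            field_simp
    have htend : Filter.Tendsto (fun b : ℝ => M * Real.exp (-b * n.natAbs))
        (nhdsWithin a (Set.Ioo 0 a)) (nhds (M * Real.exp (-a * n.natAbs))) := by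
      apply Filter.Tendsto.mono_left _ nhdsWithin_le_nhds
      exact (Continuous.tendsto (by continuity) a)
    haveI hne : (nhdsWithin a (Set.Ioo (0:ℝ) a)).NeBot := by
      apply mem_closure_iff_nhdsWithin_neBot.mp
      rw [closure_Ioo ha.ne]
      exact ⟨ha.le, le_refl a⟩
    exact ge_of_tendsto htend
      (Filter.eventually_of_mem self_mem_nhdsWithin (fun b hb => hb' b hb))
  -- summability
  have hsummable : Summable (fourierCoeff (⇑F)) := by
    apply Summable.of_norm_bounded (g := fun n : ℤ => M * Real.exp (-a * n.natAbs)) _ hdecay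
    have hkey : ∀ n : ℤ, M * Real.exp (-a * n.natAbs) = M * (Real.exp (-a))^n.natAbs := by
      intro n
      congr 1
      rw [← Real.exp_nat_mul]
      congr 1
      ring
    simp_rw [hkey]
    have hr1 : Real.exp (-a) < 1 := by
      rw [Real.exp_lt_one_iff]
      linarith
    have hgeo : Summable (fun k : ℕ => M * (Real.exp (-a))^k) :=
      (summable_geometric_of_lt_one (Real.exp_nonneg _) hr1).mul_left M
    apply Summable.of_nat_of_neg_add_one
    · exact hgeo.congr (by intro k; simp)
    · apply (hgeo.mul_left (Real.exp (-a))).congr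
      intro k
      show Real.exp (-a) * (M * Real.exp (-a) ^ k) = M * Real.exp (-a) ^ (-((k:ℤ)+1)).natAbs
      have hna : (-((k:ℤ)+1)).natAbs = k + 1 := by
        rw [Int.natAbs_neg]
        exact_mod_cast Int.natAbs_natCast (k+1)
      rw [hna, pow_succ]
      ring
  set c : ℤ → ℂ := fourierCoeff (⇑F) with hc
  have hNC : (N:ℂ) ≠ 0 := by exact_mod_cast hN.ne'
  -- pointwise Fourier expansion at sample points
  have hpoint : ∀ j : ℕ, HasSum
      (fun n : ℤ => c n * (fourier n ((2*Real.pi*j/N : ℝ) : AddCircle (2*Real.pi)) : ℂ))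
      (h ((2*Real.pi*(j:ℝ)/N : ℝ) : ℂ)) := by
    intro j
    have := has_pointwise_sum_fourier_series_of_summable hsummable
      (((2*Real.pi*j/N : ℝ)) : AddCircle (2*Real.pi))
    simpa [smul_eq_mul, hFcoe] using this
  set S : ℂ := (1 / (N:ℂ)) * ∑ j ∈ Finset.range N, h ((2*Real.pi*(j:ℝ)/N : ℝ) : ℂ) with hSdef
  have hS : HasSum (fun n : ℤ => if ((N:ℤ) ∣ n) then c n else 0) S := by
    have h1 := hasSum_sum (f := fun (j : ℕ) (n : ℤ) =>
        c n * (fourier n ((2*Real.pi*j/N : ℝ) : AddCircle (2*Real.pi)) : ℂ))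
      (s := Finset.range N) (fun j _ => hpoint j)
    have h2 := h1.mul_left (1 / (N:ℂ))
    have heq : (fun n : ℤ => (1 / (N:ℂ)) * ∑ j ∈ Finset.range N,
        c n * (fourier n ((2*Real.pi*j/N : ℝ) : AddCircle (2*Real.pi)) : ℂ))
        = fun n : ℤ => if ((N:ℤ) ∣ n) then c n else 0 := by
      funext n
      rw [← Finset.mul_sum, fourier_sample_sum N hN n]
      by_cases hdvd : (N:ℤ) ∣ n
      · rw [if_pos hdvd, if_pos hdvd]
        field_simp
      · rw [if_neg hdvd, if_neg hdvd, mul_zero, mul_zero]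
    rw [heq] at h2
    exact h2
  -- reindex over multiples of N
  have hNZ : ((N:ℤ)) ≠ 0 := by exact_mod_cast hN.ne'
  have hinj : Function.Injective (fun m : ℤ => (N:ℤ) * m) := fun x y hxy =>
    mul_left_cancel₀ hNZ hxy
  have hsupp : ∀ x ∉ Set.range (fun m : ℤ => (N:ℤ)*m),
      (if ((N:ℤ) ∣ x) then c x else 0) = 0 := by
    intro x hx
    rw [if_neg]
    rintro ⟨m, hm⟩
    exact hx ⟨m, hm.symm⟩
  have hS2 : HasSum (fun m : ℤ => c ((N:ℤ)*m)) S := by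
    have h3 := (hinj.hasSum_iff hsupp).mpr hS
    have heq2 : ((fun x : ℤ => if ((N:ℤ) ∣ x) then c x else 0) ∘ (fun m : ℤ => (N:ℤ)*m))
        = fun m : ℤ => c ((N:ℤ)*m) := by
      funext m
      simp only [Function.comp_apply]
      rw [if_pos (dvd_mul_right _ _)]
    rw [heq2] at h3
    exact h3
  -- the zeroth coefficient is the integral
  have hc0 : c 0 = (1/(2*(Real.pi:ℂ))) * ∫ φ in (0:ℝ)..(2*Real.pi), h φ := by
    rw [hcoeff 0]
    simp only [Int.cast_zero, neg_zero, zero_mul, Complex.exp_zero, one_mul]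
    rw [Complex.real_smul]
    norm_num
  have hdiff : HasSum (fun m : ℤ => c ((N:ℤ)*m) - if m = 0 then c 0 else 0) (S - c 0) :=
    hS2.sub (hasSum_ite_eq 0 (c 0))
  -- the comparison series
  set r : ℝ := Real.exp (-(a*N)) with hrdef
  have hr0 : 0 < r := Real.exp_pos _
  have haN : 0 < a * N := by
    have : (0:ℝ) < N := by exact_mod_cast hN
    positivity
  have hr1 : r < 1 := by
    rw [hrdef, Real.exp_lt_one_iff]
    linarith
  have h1r : 0 < 1 - r := by linarith
  have hcompare : ∀ m : ℤ, ‖c ((N:ℤ)*m) - if m = 0 then c 0 else 0‖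
      ≤ (if m = 0 then 0 else M * r ^ m.natAbs) := by
    intro m
    by_cases hm : m = 0
    · subst hm
      simp
    · rw [if_neg hm, sub_zero, if_neg hm]
      calc ‖c ((N:ℤ)*m)‖ ≤ M * Real.exp (-a * ((N:ℤ)*m).natAbs) := hdecay _
        _ = M * r ^ m.natAbs := by
            congr 1
            rw [Int.natAbs_mul, Int.natAbs_natCast, hrdef, ← Real.exp_nat_mul]
            congr 1
            push_cast
            ring
  have geo : HasSum (fun k : ℕ => M * r^k) (M * (1-r)⁻¹) :=
    (hasSum_geometric_of_lt_one hr0.le hr1).mul_left M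
  have hpos : HasSum (fun k : ℕ => if ((k:ℤ)) = 0 then 0 else M * r ^ ((k:ℤ)).natAbs)
      (M * (1-r)⁻¹ - M) := by
    have h4 := geo.sub (hasSum_ite_eq 0 M)
    have heq3 : (fun k : ℕ => M * r^k - if k = 0 then M else 0)
        = fun k : ℕ => if ((k:ℤ)) = 0 then 0 else M * r ^ ((k:ℤ)).natAbs := by
      funext k
      by_cases hk : k = 0
      · subst hk; simp
      · have : ((k:ℤ)) ≠ 0 := by exact_mod_cast hk
        rw [if_neg hk, if_neg this, sub_zero, Int.natAbs_natCast]
    rw [heq3] at h4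
    exact h4
  have hneg : HasSum (fun k : ℕ => if (-((k:ℤ)+1)) = 0 then 0 else M * r ^ (-((k:ℤ)+1)).natAbs)
      (r * (M * (1-r)⁻¹)) := by
    have h5 := geo.mul_left r
    have heq4 : (fun k : ℕ => r * (M * r^k))
        = fun k : ℕ => if (-((k:ℤ)+1)) = 0 then 0 else M * r ^ (-((k:ℤ)+1)).natAbs := by
      funext k
      have hne : (-((k:ℤ)+1)) ≠ 0 := by omega
      have hna : (-((k:ℤ)+1)).natAbs = k + 1 := by
        rw [Int.natAbs_neg]
        exact_mod_cast Int.natAbs_natCast (k+1)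
      rw [if_neg hne, hna, pow_succ]
      ring
    rw [heq4] at h5
    exact h5
  have htotal : HasSum (fun m : ℤ => if m = 0 then 0 else M * r ^ m.natAbs)
      ((M * (1-r)⁻¹ - M) + r * (M * (1-r)⁻¹)) :=
    HasSum.of_nat_of_neg_add_one hpos hneg
  have hmain : ‖S - c 0‖ ≤ (M * (1-r)⁻¹ - M) + r * (M * (1-r)⁻¹) := by
    rw [← hdiff.tsum_eq]
    exact tsum_of_norm_bounded htotal hcompare
  -- identify with the goal
  have hgoal_eq : (1 / (N : ℂ)) * ∑ j ∈ Finset.range N, h (2 * Real.pi * j / N)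
      - (1 / (2 * (Real.pi : ℂ))) * ∫ φ in (0 : ℝ)..(2 * Real.pi), h φ = S - c 0 := by
    rw [hc0, hSdef]
    congr 2
    apply Finset.sum_congr rfl
    intro j _
    congr 1
    push_cast
    ring
  rw [hgoal_eq]
  refine le_trans hmain (le_of_eq ?_)
  have hEr : Real.exp (a*N) = r⁻¹ := by
    rw [hrdef, Real.exp_neg, inv_inv]
  rw [hEr]
  have hrne : r ≠ 0 := hr0.ne'
  have h1rne : 1 - r ≠ 0 := h1r.ne'
  have hden : r⁻¹ - 1 ≠ 0 := by
    have hinv : 1 < r⁻¹ := by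
      nlinarith [mul_inv_cancel₀ hr0.ne', inv_pos.mpr hr0]
    linarith
  field_simp
  ring
end

section
/- Define g(z) = Σ_{n=K+2}^∞ 4n·J_n(z)² for an integer K ≥ 0. Then g is differentiable on (0,∞) with g'(z) = 2z·(J_{K+1}(z)² + J_{K+2}(z)²). -/
namespace BesselAux

noncomputable def bTerm (n m : ℕ) (z : ℝ) : ℝ :=
  (-1 : ℝ) ^ m / (m.factorial * (m + n).factorial) * (z / 2) ^ (2 * m + n)

lemma besselJ_eq (n : ℕ) (z : ℝ) : besselJ n z = ∑' m, bTerm n m z := rfl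

lemma abs_bTerm (n m : ℕ) (z : ℝ) :
    |bTerm n m z| = (|z| / 2) ^ (2 * m + n) / (m.factorial * (m + n).factorial) := by
  have h2 : |z/2| = |z|/2 := by rw [abs_div]; norm_num
  rw [bTerm, abs_mul, abs_div, abs_pow, abs_neg, abs_one, one_pow, abs_pow, h2]
  rw [abs_of_nonneg (by positivity : (0:ℝ) ≤ (m.factorial * (m+n).factorial : ℝ))]
  ring

lemma key_div (x : ℝ) (hx : 0 ≤ x) (c n p q : ℕ)
    (h : n.factorial * c ≤ p.factorial * q.factorial) :
    (c : ℝ) * (x ^ p / p.factorial) * (x ^ q / q.factorial) ≤ x ^ (p + q) / n.factorial := by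
  have hp : (0:ℝ) < p.factorial := by positivity
  have hq : (0:ℝ) < q.factorial := by positivity
  have hn : (0:ℝ) < n.factorial := by positivity
  have e : (c : ℝ) * (x ^ p / p.factorial) * (x ^ q / q.factorial)
      = (c * x ^ (p + q)) / (p.factorial * q.factorial) := by
    rw [pow_add]; field_simp
  rw [e, div_le_div_iff₀ (by positivity) hn]
  have hc : ((n.factorial * c : ℕ) : ℝ) ≤ ((p.factorial * q.factorial : ℕ) : ℝ) := by
    exact_mod_cast h
  push_cast at hc
  nlinarith [pow_nonneg hx (p + q)]




/-- pointwise bound on terms -/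
lemma abs_bTerm_le {z R : ℝ} (hz : |z| ≤ R) (n m : ℕ) :
    |bTerm n m z| ≤ (R / 2) ^ n / n.factorial * (((R / 2) ^ 2) ^ m / m.factorial) := by
  have hR : 0 ≤ R := le_trans (abs_nonneg z) hz
  rw [abs_bTerm]
  have hpow : (|z| / 2) ^ (2 * m + n) ≤ (R / 2) ^ (2 * m + n) := by
    apply pow_le_pow_left₀ (by positivity) (by linarith)
  have he : (R / 2) ^ (2 * m + n) = ((R/2)^2)^m * (R/2)^n := by
    rw [← pow_mul, ← pow_add]
  have hfac : (n.factorial * m.factorial : ℝ) ≤ (m.factorial * (m + n).factorial : ℝ) := by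
    have : n.factorial * m.factorial ≤ m.factorial * (m+n).factorial := by
      rw [Nat.mul_comm]
      exact Nat.mul_le_mul_left _ (Nat.factorial_le (Nat.le_add_left n m))
    exact_mod_cast this
  calc (|z| / 2) ^ (2 * m + n) / (m.factorial * (m + n).factorial)
      ≤ (R / 2) ^ (2 * m + n) / (n.factorial * m.factorial) := by
        apply div_le_div₀ (by positivity) hpow (by positivity) hfac
    _ = (R / 2) ^ n / n.factorial * (((R / 2) ^ 2) ^ m / m.factorial) := by
        rw [he]; field_simp

lemma summable_bound (R : ℝ) (c : ℝ) :
    Summable (fun m : ℕ => c * (((R / 2) ^ 2) ^ m / m.factorial)) :=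
  (Real.summable_pow_div_factorial _).mul_left _

lemma summable_bTerm (n : ℕ) (z : ℝ) : Summable (fun m => bTerm n m z) := by
  apply Summable.of_norm_bounded (summable_bound |z| ((|z|/2)^n / n.factorial))
  intro m
  exact abs_bTerm_le (le_refl _) n m

noncomputable def EC (R : ℝ) : ℝ := ∑' m : ℕ, ((R / 2) ^ 2) ^ m / m.factorial

lemma EC_nonneg (R : ℝ) : 0 ≤ EC R :=
  tsum_nonneg fun m => by positivity

lemma besselJ_bound {z R : ℝ} (hz : |z| ≤ R) (n : ℕ) :
    |besselJ n z| ≤ (R / 2) ^ n / n.factorial * EC R := by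
  rw [besselJ_eq, ← Real.norm_eq_abs]
  have h1 : ‖∑' m, bTerm n m z‖ ≤ ∑' m : ℕ, (R / 2) ^ n / n.factorial * (((R / 2) ^ 2) ^ m / m.factorial) := by
    apply tsum_of_norm_bounded (summable_bound R _).hasSum
    intro m; exact abs_bTerm_le hz n m
  rw [tsum_mul_left] at h1
  exact h1




/-- the derivative of the m-th term of `besselJ (n+1)` -/
noncomputable def dTerm (n m : ℕ) (x : ℝ) : ℝ :=
  (-1 : ℝ) ^ m / (m.factorial * (m + (n+1)).factorial) *
    (((2 * m + (n+1) : ℕ) : ℝ) * (x / 2) ^ (2 * m + n) * (1 / 2))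

lemma hasDerivAt_bTerm (n m : ℕ) (x : ℝ) :
    HasDerivAt (fun w => bTerm (n+1) m w) (dTerm n m x) x := by
  have h : HasDerivAt (fun w : ℝ => (w/2) ^ (2*m+(n+1)))
      (((2*m+(n+1) : ℕ) : ℝ) * (x/2) ^ (2*m+(n+1)-1) * (1/2)) x :=
    ((hasDerivAt_id x).div_const 2).pow _
  have e : 2*m+(n+1)-1 = 2*m+n := by omega
  rw [e] at h
  exact h.const_mul _

/-- the auxiliary series -/
noncomputable def cTerm (n m : ℕ) (x : ℝ) : ℝ :=
  (-1 : ℝ) ^ m * m / (m.factorial * (m + n + 1).factorial) * (x / 2) ^ (2 * m + n)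

lemma summable_cTerm (n : ℕ) (x : ℝ) : Summable (fun m => cTerm n m x) := by
  apply Summable.of_norm_bounded (g := fun m : ℕ => (|x|/2)^n * (((|x|/2)^2)^m / m.factorial))
    ((Real.summable_pow_div_factorial _).mul_left _)
  intro m
  have h2 : |x/2| = |x|/2 := by rw [abs_div]; norm_num
  have habs : ‖cTerm n m x‖ = (m : ℝ) / (m.factorial * (m + n + 1).factorial) * (|x|/2) ^ (2*m+n) := by
    rw [Real.norm_eq_abs, cTerm, abs_mul, abs_div, abs_mul, abs_pow, abs_neg, abs_one, one_pow,
      one_mul, abs_pow, h2, Nat.abs_cast]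
    rw [abs_of_nonneg (by positivity : (0:ℝ) ≤ (m.factorial * (m+n+1).factorial : ℝ))]
  rw [habs]
  have hfrac : (m : ℝ) / (m.factorial * (m + n + 1).factorial) ≤ 1 / m.factorial := by
    rw [div_le_div_iff₀ (by positivity) (by positivity)]
    have h1 : m * m.factorial ≤ m.factorial * (m+n+1).factorial := by
      rw [Nat.mul_comm]
      exact Nat.mul_le_mul_left _ (le_trans (by omega) (Nat.self_le_factorial (m+n+1)))
    calc (m : ℝ) * m.factorial ≤ (m.factorial : ℝ) * (m+n+1).factorial := by exact_mod_cast h1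
      _ = _ := by ring
  have hpowe : (|x|/2) ^ (2*m+n) = ((|x|/2)^2)^m * (|x|/2)^n := by rw [← pow_mul, ← pow_add]
  calc (m : ℝ) / (m.factorial * (m + n + 1).factorial) * (|x|/2) ^ (2*m+n)
      ≤ 1 / m.factorial * (|x|/2) ^ (2*m+n) := by
        apply mul_le_mul_of_nonneg_right hfrac (by positivity)
    _ = (|x|/2)^n * (((|x|/2)^2)^m / m.factorial) := by rw [hpowe]; ring

lemma cTerm_succ (n m : ℕ) (x : ℝ) : cTerm n (m+1) x = - bTerm (n+2) m x := by
  rw [cTerm, bTerm]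
  have e : 2*(m+1)+n = 2*m+(n+2) := by omega
  rw [e]
  have e2 : (m+1) + n + 1 = m + (n+2) := by omega
  rw [e2, Nat.factorial_succ m]
  have h1 : (0:ℝ) < m.factorial := by positivity
  have h2 : (0:ℝ) < (m+(n+2)).factorial := by positivity
  push_cast
  field_simp
  ring

lemma tsum_cTerm (n : ℕ) (x : ℝ) : ∑' m, cTerm n m x = - besselJ (n+2) x := by
  rw [Summable.tsum_eq_zero_add (summable_cTerm n x)]
  have h0 : cTerm n 0 x = 0 := by simp [cTerm]
  rw [h0, zero_add]
  have : ∀ m : ℕ, cTerm n (m+1) x = - bTerm (n+2) m x := fun m => cTerm_succ n m x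
  rw [tsum_congr this, tsum_neg, besselJ_eq]

lemma dTerm_eq (n m : ℕ) (x : ℝ) :
    dTerm n m x = (bTerm n m x + cTerm n m x) / 2 := by
  rw [dTerm, bTerm, cTerm]
  have e2 : m + (n+1) = (m + n) + 1 := by omega
  rw [e2, Nat.factorial_succ (m+n)]
  have h1 : (0:ℝ) < m.factorial := by positivity
  have h2 : (0:ℝ) < (m+n).factorial := by positivity
  push_cast
  field_simp
  ring

lemma tsum_dTerm (n : ℕ) (x : ℝ) :
    ∑' m, dTerm n m x = (besselJ n x - besselJ (n+2) x) / 2 := by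
  rw [tsum_congr (fun m => dTerm_eq n m x)]
  rw [tsum_div_const, Summable.tsum_add (summable_bTerm n x) (summable_cTerm n x),
    tsum_cTerm, ← besselJ_eq]
  ring




lemma abs_dTerm_le {R : ℝ} (n m : ℕ) {w : ℝ} (hw : |w| ≤ R) :
    ‖dTerm n m w‖ ≤ (R/2) ^ n * (((R/2)^2) ^ m / m.factorial) := by
  have hR : 0 ≤ R := le_trans (abs_nonneg w) hw
  have h2 : |w/2| = |w|/2 := by rw [abs_div]; norm_num
  have habs : ‖dTerm n m w‖ =
      ((2*m+(n+1) : ℕ) : ℝ) / (m.factorial * (m+(n+1)).factorial) * (|w|/2) ^ (2*m+n) * (1/2) := by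
    rw [Real.norm_eq_abs, dTerm]
    simp only [abs_mul, abs_div, abs_pow, abs_neg, abs_one, one_pow, Nat.abs_cast, h2, abs_two]
    ring
  rw [habs]
  have hfrac : ((2*m+(n+1) : ℕ) : ℝ) / (m.factorial * (m+(n+1)).factorial) * (1/2)
      ≤ 1 / m.factorial := by
    rw [div_mul_eq_mul_div, mul_one_div, div_div, div_le_div_iff₀ (by positivity) (by positivity)]
    have hle : 2*m+(n+1) ≤ 2 * (m+(n+1)).factorial :=
      le_trans (by omega) (Nat.mul_le_mul_left 2 (Nat.self_le_factorial _))
    have h1 : ((2*m+(n+1) : ℕ) : ℝ) ≤ 2 * (m+(n+1)).factorial := by exact_mod_cast hle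
    have h2' : (0:ℝ) < m.factorial := by positivity
    nlinarith [h1, h2'.le]
  have hpow : (|w|/2) ^ (2*m+n) ≤ (R/2) ^ (2*m+n) :=
    pow_le_pow_left₀ (by positivity) (by linarith) _
  have hpowe : (R/2) ^ (2*m+n) = ((R/2)^2)^m * (R/2)^n := by rw [← pow_mul, ← pow_add]
  calc ((2*m+(n+1) : ℕ) : ℝ) / (m.factorial * (m+(n+1)).factorial) * (|w|/2) ^ (2*m+n) * (1/2)
      = ((2*m+(n+1) : ℕ) : ℝ) / (m.factorial * (m+(n+1)).factorial) * (1/2) * (|w|/2) ^ (2*m+n) := by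
        ring
    _ ≤ 1 / m.factorial * (R/2) ^ (2*m+n) := by
        apply mul_le_mul hfrac hpow (by positivity) (by positivity)
    _ = (R/2) ^ n * (((R/2)^2) ^ m / m.factorial) := by rw [hpowe]; ring

lemma besselJ_hasDerivAt (n : ℕ) (x : ℝ) :
    HasDerivAt (besselJ (n+1)) ((besselJ n x - besselJ (n+2) x) / 2) x := by
  set R : ℝ := |x| + 1 with hR
  have hx : x ∈ Set.Ioo (-R) R := by
    constructor <;> [nlinarith [abs_nonneg x, neg_abs_le x]; nlinarith [le_abs_self x]]
  have main : HasDerivAt (fun z => ∑' m, bTerm (n+1) m z) (∑' m, dTerm n m x) x := by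
    apply hasDerivAt_tsum_of_isPreconnected
      (((Real.summable_pow_div_factorial ((R/2)^2)).mul_left ((R/2)^n)))
      isOpen_Ioo (isPreconnected_Ioo) (fun m y _ => hasDerivAt_bTerm n m y)
      (fun m y hy => ?_) hx (summable_bTerm (n+1) x) hx
    have hyR : |y| ≤ R := by
      rw [abs_le]; exact ⟨(hy.1).le, (hy.2).le⟩
    exact abs_dTerm_le n m hyR
  rw [tsum_dTerm] at main
  have : besselJ (n+1) = fun z => ∑' m, bTerm (n+1) m z := by rfl
  rw [this]
  exact main





lemma besselJ_rec (n : ℕ) {x : ℝ} (hx : x ≠ 0) :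
    besselJ n x + besselJ (n+2) x = 2 * ((n : ℝ) + 1) / x * besselJ (n+1) x := by
  have hterm : ∀ m, bTerm n m x - cTerm n m x = 2 * ((n : ℝ) + 1) / x * bTerm (n+1) m x := by
    intro m
    rw [bTerm, cTerm, bTerm]
    have e : 2*m+(n+1) = (2*m+n)+1 := by omega
    rw [e, pow_succ]
    have e2 : m + (n+1) = (m+n)+1 := by omega
    rw [e2, Nat.factorial_succ (m+n)]
    have h1 : (0:ℝ) < m.factorial := by positivity
    have h2 : (0:ℝ) < (m+n).factorial := by positivity
    push_cast
    field_simp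
    ring
  calc besselJ n x + besselJ (n+2) x = ∑' m, (bTerm n m x - cTerm n m x) := by
        rw [Summable.tsum_sub (summable_bTerm n x) (summable_cTerm n x), ← besselJ_eq, tsum_cTerm]; ring
    _ = ∑' m, 2 * ((n : ℝ) + 1) / x * bTerm (n+1) m x := tsum_congr hterm
    _ = 2 * ((n : ℝ) + 1) / x * besselJ (n+1) x := by rw [tsum_mul_left, ← besselJ_eq]

end BesselAux

open BesselAux in
theorem deriv_tail_sum_4n_besselJ_sq (K : ℕ) (z : ℝ) (hz : 0 < z) :
    HasDerivAt (fun w => ∑' n : ℕ, 4 * ((n + K + 2 : ℕ) : ℝ) * besselJ (n + K + 2) w ^ 2)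
      (2 * z * (besselJ (K + 1) z ^ 2 + besselJ (K + 2) z ^ 2)) z := by
  set R : ℝ := z + 1 with hRdef
  have hR0 : (0:ℝ) < R := by linarith
  set x : ℝ := R / 2 with hxdef
  have hx0 : (0:ℝ) ≤ x := by positivity
  set E : ℝ := EC R with hEdef
  have hE0 : 0 ≤ E := EC_nonneg R
  set M : ℕ → ℝ := fun k => x ^ k / k.factorial * E with hM
  have hM0 : ∀ k, 0 ≤ M k := fun k => by rw [hM]; positivity
  have habsle : ∀ y ∈ Set.Ioo (0:ℝ) R, |y| ≤ R := by
    intro y hy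
    rw [abs_le]; exact ⟨by linarith [hy.1], hy.2.le⟩
  have hbJ : ∀ y ∈ Set.Ioo (0:ℝ) R, ∀ k, |besselJ k y| ≤ M k := by
    intro y hy k
    exact besselJ_bound (habsle y hy) k
  -- the derivative of each summand
  set g' : ℕ → ℝ → ℝ := fun n w =>
    4 * ((n + K + 2 : ℕ) : ℝ) *
      (2 * besselJ (n + K + 2) w ^ 1 * ((besselJ (n + K + 1) w - besselJ (n + K + 3) w) / 2))
    with hg'def
  have hg : ∀ n y, y ∈ Set.Ioo (0:ℝ) R →
      HasDerivAt (fun w => 4 * ((n + K + 2 : ℕ) : ℝ) * besselJ (n + K + 2) w ^ 2) (g' n y) y := by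
    intro n y _
    have h := (besselJ_hasDerivAt (n + K + 1) y).pow 2
    have h2 := h.const_mul (4 * ((n + K + 2 : ℕ) : ℝ))
    have e : g' n y = 4 * ((n + K + 2 : ℕ) : ℝ) *
        (((2:ℕ):ℝ) * besselJ (n + K + 2) y ^ (2 - 1) *
          ((besselJ (n + K + 1) y - besselJ (n + K + 3) y) / 2)) := by
      rw [hg'def]; norm_num
    rw [e]
    exact h2
  -- uniform bound
  have hu_sum : Summable (fun n : ℕ =>
      4 * E^2 * (x ^ (2*K+3) + x ^ (2*K+5)) * ((x^2) ^ n / n.factorial)) :=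
    (Real.summable_pow_div_factorial (x^2)).mul_left _
  have hg' : ∀ n y, y ∈ Set.Ioo (0:ℝ) R → ‖g' n y‖ ≤
      4 * E^2 * (x ^ (2*K+3) + x ^ (2*K+5)) * ((x^2) ^ n / n.factorial) := by
    intro n y hy
    have e1 : g' n y = 4 * ((n + K + 2 : ℕ) : ℝ) *
        (besselJ (n + K + 2) y * (besselJ (n + K + 1) y - besselJ (n + K + 3) y)) := by
      rw [hg'def]; ring
    have habs : ‖g' n y‖ ≤ 4 * ((n + K + 2 : ℕ) : ℝ) *
        (M (n+K+2) * (M (n+K+1) + M (n+K+3))) := by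
      rw [e1, Real.norm_eq_abs, abs_mul, abs_mul]
      rw [abs_of_nonneg (by norm_num : (0:ℝ) ≤ 4), Nat.abs_cast, abs_mul]
      apply mul_le_mul_of_nonneg_left _ (by positivity)
      apply mul_le_mul (hbJ y hy _) ((abs_sub _ _).trans (add_le_add (hbJ y hy _) (hbJ y hy _)))
        (abs_nonneg _) (hM0 _)
    refine habs.trans ?_
    have hT1 : ((n + K + 2 : ℕ) : ℝ) * (x ^ (n+K+2) / (n+K+2).factorial)
        * (x ^ (n+K+1) / (n+K+1).factorial) ≤ x ^ ((n+K+2)+(n+K+1)) / n.factorial := by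
      apply key_div x hx0
      have h1 : (n+K+2) * n.factorial ≤ (n+K+2).factorial * (n+K+1).factorial :=
        Nat.mul_le_mul (Nat.self_le_factorial _) (Nat.factorial_le (by omega))
      rw [Nat.mul_comm]; exact h1
    have hT2 : ((n + K + 2 : ℕ) : ℝ) * (x ^ (n+K+2) / (n+K+2).factorial)
        * (x ^ (n+K+3) / (n+K+3).factorial) ≤ x ^ ((n+K+2)+(n+K+3)) / n.factorial := by
      apply key_div x hx0
      have h1 : (n+K+2) * n.factorial ≤ (n+K+2).factorial * (n+K+3).factorial :=
        Nat.mul_le_mul (Nat.self_le_factorial _) (Nat.factorial_le (by omega))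
      rw [Nat.mul_comm]; exact h1
    have epow1 : x ^ ((n+K+2)+(n+K+1)) = x ^ (2*K+3) * (x^2) ^ n := by
      rw [← pow_mul, ← pow_add]; congr 1; omega
    have epow2 : x ^ ((n+K+2)+(n+K+3)) = x ^ (2*K+5) * (x^2) ^ n := by
      rw [← pow_mul, ← pow_add]; congr 1; omega
    rw [epow1] at hT1; rw [epow2] at hT2
    have expand : 4 * ((n + K + 2 : ℕ) : ℝ) * (M (n+K+2) * (M (n+K+1) + M (n+K+3)))
        = 4 * E^2 * (((n + K + 2 : ℕ) : ℝ) * (x ^ (n+K+2) / (n+K+2).factorial)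
            * (x ^ (n+K+1) / (n+K+1).factorial)
          + ((n + K + 2 : ℕ) : ℝ) * (x ^ (n+K+2) / (n+K+2).factorial)
            * (x ^ (n+K+3) / (n+K+3).factorial)) := by
      rw [hM]; ring
    rw [expand]
    calc 4 * E^2 * (((n + K + 2 : ℕ) : ℝ) * (x ^ (n+K+2) / (n+K+2).factorial)
            * (x ^ (n+K+1) / (n+K+1).factorial)
          + ((n + K + 2 : ℕ) : ℝ) * (x ^ (n+K+2) / (n+K+2).factorial)
            * (x ^ (n+K+3) / (n+K+3).factorial))
        ≤ 4 * E^2 * (x ^ (2*K+3) * (x^2) ^ n / n.factorial + x ^ (2*K+5) * (x^2) ^ n / n.factorial) := by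
          apply mul_le_mul_of_nonneg_left _ (by positivity)
          exact add_le_add hT1 hT2
      _ = 4 * E^2 * (x ^ (2*K+3) + x ^ (2*K+5)) * ((x^2) ^ n / n.factorial) := by
          field_simp
  -- membership
  have hzmem : z ∈ Set.Ioo (0:ℝ) R := ⟨hz, by rw [hRdef]; linarith⟩
  -- summability at z
  have hg0 : Summable (fun n : ℕ => 4 * ((n + K + 2 : ℕ) : ℝ) * besselJ (n + K + 2) z ^ 2) := by
    apply Summable.of_nonneg_of_le (fun n => by positivity)
      (fun n => ?_) ((Real.summable_pow_div_factorial (x^2)).mul_left (4 * E^2 * x ^ (2*K+4)))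
    have hb := hbJ z hzmem (n+K+2)
    have hsq : besselJ (n+K+2) z ^ 2 ≤ M (n+K+2) ^ 2 := by
      rw [← sq_abs (besselJ (n+K+2) z)]
      exact pow_le_pow_left₀ (abs_nonneg _) hb 2
    have hTT : ((n + K + 2 : ℕ) : ℝ) * (x ^ (n+K+2) / (n+K+2).factorial)
        * (x ^ (n+K+2) / (n+K+2).factorial) ≤ x ^ ((n+K+2)+(n+K+2)) / n.factorial := by
      apply key_div x hx0
      calc n.factorial * (n+K+2) = (n+K+2) * n.factorial := by ring
        _ ≤ (n+K+2).factorial * (n+K+2).factorial :=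
            Nat.mul_le_mul (Nat.self_le_factorial _) (Nat.factorial_le (by omega))
    have epow : x ^ ((n+K+2)+(n+K+2)) = x ^ (2*K+4) * (x^2) ^ n := by
      rw [← pow_mul, ← pow_add]; congr 1; omega
    rw [epow] at hTT
    calc 4 * ((n + K + 2 : ℕ) : ℝ) * besselJ (n + K + 2) z ^ 2
        ≤ 4 * ((n + K + 2 : ℕ) : ℝ) * M (n+K+2) ^ 2 := by
          apply mul_le_mul_of_nonneg_left hsq (by positivity)
      _ = 4 * E^2 * (((n + K + 2 : ℕ) : ℝ) * (x ^ (n+K+2) / (n+K+2).factorial)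
            * (x ^ (n+K+2) / (n+K+2).factorial)) := by rw [hM]; ring
      _ ≤ 4 * E^2 * (x ^ (2*K+4) * (x^2) ^ n / n.factorial) := by
          apply mul_le_mul_of_nonneg_left hTT (by positivity)
      _ = 4 * E^2 * x ^ (2*K+4) * ((x^2) ^ n / n.factorial) := by ring
  -- the main application
  have main : HasDerivAt (fun w => ∑' n : ℕ, 4 * ((n + K + 2 : ℕ) : ℝ) * besselJ (n + K + 2) w ^ 2)
      (∑' n, g' n z) z :=
    hasDerivAt_tsum_of_isPreconnected hu_sum isOpen_Ioo isPreconnected_Ioo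
      hg hg' hzmem hg0 hzmem
  -- compute the sum of the derivatives
  set b : ℕ → ℝ := fun n => besselJ (n + K + 1) z ^ 2 with hb
  have hb_sum : Summable b := by
    apply Summable.of_nonneg_of_le (fun n => by rw [hb]; positivity)
      (fun n => ?_) ((Real.summable_pow_div_factorial (x^2)).mul_left (E^2 * x ^ (2*K+2)))
    have hbd := hbJ z hzmem (n+K+1)
    have hsq : b n ≤ M (n+K+1) ^ 2 := by
      simp only [hb]
      rw [← sq_abs (besselJ (n+K+1) z)]
      exact pow_le_pow_left₀ (abs_nonneg _) hbd 2
    have hTT : (1 : ℝ) * (x ^ (n+K+1) / (n+K+1).factorial)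
        * (x ^ (n+K+1) / (n+K+1).factorial) ≤ x ^ ((n+K+1)+(n+K+1)) / n.factorial := by
      have := key_div x hx0 1 n (n+K+1) (n+K+1) ?_
      · exact_mod_cast this
      · calc n.factorial * 1 = n.factorial := by ring
          _ ≤ (n+K+1).factorial := Nat.factorial_le (by omega)
          _ ≤ (n+K+1).factorial * (n+K+1).factorial :=
              Nat.le_mul_of_pos_right _ (Nat.factorial_pos _)
    have epow : x ^ ((n+K+1)+(n+K+1)) = x ^ (2*K+2) * (x^2) ^ n := by
      rw [← pow_mul, ← pow_add]; congr 1; omega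
    rw [epow] at hTT
    calc b n ≤ M (n+K+1) ^ 2 := hsq
      _ = E^2 * ((1:ℝ) * (x ^ (n+K+1) / (n+K+1).factorial) * (x ^ (n+K+1) / (n+K+1).factorial)) := by
          rw [hM]; ring
      _ ≤ E^2 * (x ^ (2*K+2) * (x^2) ^ n / n.factorial) := by
          apply mul_le_mul_of_nonneg_left hTT (by positivity)
      _ = E^2 * x ^ (2*K+2) * ((x^2) ^ n / n.factorial) := by ring
  have hterm : ∀ n : ℕ, g' n z = 2 * z * (b n - b (n+2)) := by
    intro n
    have hrec := besselJ_rec (n + K + 1) hz.ne'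
    have hmul : z * (besselJ (n+K+1) z + besselJ (n+K+3) z)
        = 2 * ((n + K + 1 : ℕ) + 1 : ℝ) * besselJ (n+K+2) z := by
      rw [hrec]; field_simp
    simp only [hg'def, hb]
    have e3 : n + 2 + K + 1 = n + K + 3 := by omega
    rw [e3]
    push_cast at hmul ⊢
    linear_combination (-2 : ℝ) * (besselJ (n+K+1) z - besselJ (n+K+3) z) * hmul
  have hsumval : ∑' n, g' n z = 2 * z * (besselJ (K + 1) z ^ 2 + besselJ (K + 2) z ^ 2) := by
    rw [tsum_congr hterm]
    have hb2 : Summable (fun n => b (n + 2)) := (summable_nat_add_iff 2).2 hb_sum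
    calc ∑' n, 2 * z * (b n - b (n+2)) = 2 * z * ∑' n, (b n - b (n+2)) := tsum_mul_left
      _ = 2 * z * (∑' n, b n - ∑' n, b (n+2)) := by rw [Summable.tsum_sub hb_sum hb2]
      _ = 2 * z * (b 0 + b 1) := by
          have h2 := Summable.sum_add_tsum_nat_add 2 hb_sum
          have : ∑ i ∈ Finset.range 2, b i = b 0 + b 1 := by
            simp [Finset.sum_range_succ]
          rw [← h2, this]; ring
      _ = 2 * z * (besselJ (K + 1) z ^ 2 + besselJ (K + 2) z ^ 2) := by
          simp only [hb]
          have e0 : 0 + K + 1 = K + 1 := by omega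
          have e1' : 1 + K + 1 = K + 2 := by omega
          rw [e0, e1']
  rw [hsumval] at main
  exact main
end
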